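/- arXiv:1612.07462 — 3 statements merged into one kernel-verified Lean document; each statement's English description precedes it below -/
import Mathlib

section
/- Let n ≥ 2k²(k-1) with k ≥ 2, and let H be an induced subgraph of the Kneser graph KG(n,k) with at least (2k²(k-1)/n)·C(n,k) vertices. Then the free chromatic number of H satisfies φ(H) ≥ 2n - 2, and in particular φ(H) > 2χ(H). -/
/-- The Kneser graph `KG(n,k)`: vertices are the `k`-subsets of an `n`-set,
two of them being adjacent iff they are disjoint. -/
def kneser (n k : ℕ) : SimpleGraph {A : Finset (Fin n) // A.card = k} where
  Adj A B := Disjoint A.1 B.1 ∧ A ≠ B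
  symm := ⟨by rintro A B ⟨h, hne⟩; exact ⟨h.symm, hne.symm⟩⟩
  loopless := ⟨by rintro A ⟨-, hne⟩; exact hne rfl⟩

/-- `S` is an independent set of `G`. -/
def IsIndep {V : Type*} (G : SimpleGraph V) (S : Set V) : Prop :=
  ∀ ⦃u⦄, u ∈ S → ∀ ⦃v⦄, v ∈ S → ¬ G.Adj u v

/-- A free independent set: an independent set contained in at least two
distinct maximal independent sets. -/
def FreeIndep {V : Type*} (G : SimpleGraph V) (F : Set V) : Prop :=
  IsIndep G F ∧ ∃ M₁ M₂ : Set V, M₁ ≠ M₂ ∧ F ⊆ M₁ ∧ F ⊆ M₂ ∧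
    Maximal (IsIndep G) M₁ ∧ Maximal (IsIndep G) M₂

/-- The free chromatic number `φ(G)`: the minimum number of parts in a partition of
`V(G)` into free independent sets (`⊤` if there is no such partition). -/
noncomputable def freeChrom (V : Type*) [Fintype V] [DecidableEq V]
    (G : SimpleGraph V) : ℕ∞ :=
  sInf {m : ℕ∞ | ∃ P : Finset (Finset V), (P.card : ℕ∞) = m ∧
    (∀ F ∈ P, FreeIndep G (F : Set V)) ∧
    (P : Set (Finset V)).PairwiseDisjoint id ∧ P.sup id = Finset.univ}



open Finset

section counting
variable {n k : ℕ}

lemma count_superset (F : Finset (Finset (Fin n))) (hc : ∀ C ∈ F, C.card = k)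
    (P : Finset (Fin n)) :
    (F.filter (fun C => P ⊆ C)).card ≤ (n - P.card).choose (k - P.card) := by
  classical
  have h1 : (F.filter (fun C => P ⊆ C)).card
      ≤ ((Finset.univ \ P).powersetCard (k - P.card)).card := by
    apply Finset.card_le_card_of_injOn (fun C => C \ P)
    · intro C hC
      simp only [Finset.coe_filter, Set.mem_setOf_eq, Finset.mem_filter, Finset.mem_coe] at hC ⊢
      rw [Finset.mem_powersetCard]
      refine ⟨fun x hx => ?_, ?_⟩
      · simp only [Finset.mem_sdiff] at hx ⊢
        exact ⟨Finset.mem_univ x, hx.2⟩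
      · rw [Finset.card_sdiff_of_subset hC.2, hc C hC.1]
    · intro C hC D hD h
      simp only [Finset.coe_filter, Set.mem_setOf_eq] at hC hD
      have h2 := congrArg (· ∪ P) h
      simpa [Finset.sdiff_union_of_subset hC.2, Finset.sdiff_union_of_subset hD.2] using h2
  rw [Finset.card_powersetCard, Finset.card_sdiff_of_subset (Finset.subset_univ P),
    Finset.card_univ, Fintype.card_fin] at h1
  exact h1

lemma count_pair (F : Finset (Finset (Fin n))) (hc : ∀ C ∈ F, C.card = k)
    {x y : Fin n} (hxy : x ≠ y) :
    (F.filter (fun C => x ∈ C ∧ y ∈ C)).card ≤ (n - 2).choose (k - 2) := by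
  classical
  have he : F.filter (fun C => x ∈ C ∧ y ∈ C)
      = F.filter (fun C => ({x, y} : Finset (Fin n)) ⊆ C) := by
    apply Finset.filter_congr
    intro C _
    simp [Finset.insert_subset_iff]
  rw [he]
  have := count_superset F hc {x, y}
  rwa [Finset.card_pair hxy] at this

lemma count_triple (F : Finset (Finset (Fin n))) (hc : ∀ C ∈ F, C.card = k)
    {x y z : Fin n} (hxy : x ≠ y) (hxz : x ≠ z) (hyz : y ≠ z) :
    (F.filter (fun C => x ∈ C ∧ y ∈ C ∧ z ∈ C)).card ≤ (n - 3).choose (k - 3) := by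
  classical
  have he : F.filter (fun C => x ∈ C ∧ y ∈ C ∧ z ∈ C)
      = F.filter (fun C => ({x, y, z} : Finset (Fin n)) ⊆ C) := by
    apply Finset.filter_congr
    intro C _
    simp [Finset.insert_subset_iff]
  rw [he]
  have := count_superset F hc {x, y, z}
  have hcard : ({x, y, z} : Finset (Fin n)).card = 3 := by
    rw [Finset.card_insert_of_notMem (by simp [hxy, hxz]),
      Finset.card_pair hyz]
  rwa [hcard] at this

end counting

section arith

lemma n_big {n k : ℕ} (hk : 3 ≤ k) (hn : 2 * k ^ 2 * (k - 1) ≤ n) : 36 ≤ n := by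
  have h1 : 2 ≤ k - 1 := by omega
  have h2 : 9 ≤ k ^ 2 := by nlinarith
  calc (36 : ℕ) = 2 * 9 * 2 := by norm_num
    _ ≤ 2 * k ^ 2 * (k - 1) := by
        apply Nat.mul_le_mul (Nat.mul_le_mul_left 2 h2) h1
    _ ≤ n := hn

lemma arith_main {n k : ℕ} (hk : 3 ≤ k) (hn : 2 * k ^ 2 * (k - 1) ≤ n) :
    (n - 2).choose (k - 2) + k * k * (k * (n - 3).choose (k - 3))
      ≤ k * (n - 2).choose (k - 2) := by
  have h36 := n_big hk hn
  obtain ⟨a, rfl⟩ : ∃ a, k = a + 3 := ⟨k - 3, by omega⟩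
  obtain ⟨e, rfl⟩ : ∃ e, n = e + 3 := ⟨n - 3, by omega⟩
  have hne : 2 * (a + 3) ^ 2 * (a + 2) ≤ e + 3 := by
    simpa only [show a + 3 - 1 = a + 2 by omega] using hn
  simp only [show e + 3 - 2 = e + 1 by omega, show e + 3 - 3 = e by omega,
    show a + 3 - 2 = a + 1 by omega, show a + 3 - 3 = a by omega]
  set D := Nat.choose e a with hD
  set C := Nat.choose (e + 1) (a + 1) with hC
  have hid : (e + 1) * D = C * (a + 1) := Nat.add_one_mul_choose_eq e a
  have key : (a + 3) * (a + 3) * ((a + 3) * D) ≤ (a + 2) * C := by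
    have hcoef : (a + 1) * ((a + 3) * (a + 3) * (a + 3)) ≤ (a + 2) * (e + 1) := by
      nlinarith [hne]
    have h1 : (a + 1) * ((a + 3) * (a + 3) * ((a + 3) * D))
        ≤ (a + 1) * ((a + 2) * C) := by
      calc (a + 1) * ((a + 3) * (a + 3) * ((a + 3) * D))
          = ((a + 1) * ((a + 3) * (a + 3) * (a + 3))) * D := by ring
        _ ≤ ((a + 2) * (e + 1)) * D := Nat.mul_le_mul_right D hcoef
        _ = (a + 2) * ((e + 1) * D) := by ring
        _ = (a + 2) * (C * (a + 1)) := by rw [hid]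
        _ = (a + 1) * ((a + 2) * C) := by ring
    exact Nat.le_of_mul_le_mul_left h1 (by omega)
  calc C + (a + 3) * (a + 3) * ((a + 3) * D) ≤ C + (a + 2) * C := by omega
    _ = (a + 3) * C := by ring

lemma arith_cover {n k : ℕ} (hk : 3 ≤ k) (hn : 2 * k ^ 2 * (k - 1) ≤ n) :
    (k - 1) * (n - 2).choose (k - 2) + (k * k * (n - 3).choose (k - 3)
      + k * (n - 3).choose (k - 3)) ≤ k * (n - 2).choose (k - 2) := by
  have h36 := n_big hk hn
  obtain ⟨a, rfl⟩ : ∃ a, k = a + 3 := ⟨k - 3, by omega⟩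
  obtain ⟨e, rfl⟩ : ∃ e, n = e + 3 := ⟨n - 3, by omega⟩
  have hne : 2 * (a + 3) ^ 2 * (a + 2) ≤ e + 3 := by
    simpa only [show a + 3 - 1 = a + 2 by omega] using hn
  simp only [show e + 3 - 2 = e + 1 by omega, show e + 3 - 3 = e by omega,
    show a + 3 - 2 = a + 1 by omega, show a + 3 - 3 = a by omega]
  set D := Nat.choose e a with hD
  set C := Nat.choose (e + 1) (a + 1) with hC
  have hid : (e + 1) * D = C * (a + 1) := Nat.add_one_mul_choose_eq e a
  have key : (a + 3) * (a + 3) * D + (a + 3) * D ≤ C := by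
    have hcoef : (a + 1) * ((a + 3) * (a + 3) + (a + 3)) ≤ e + 1 := by
      nlinarith [hne]
    have h1 : (a + 1) * ((a + 3) * (a + 3) * D + (a + 3) * D)
        ≤ (a + 1) * C := by
      calc (a + 1) * ((a + 3) * (a + 3) * D + (a + 3) * D)
          = ((a + 1) * ((a + 3) * (a + 3) + (a + 3))) * D := by ring
        _ ≤ (e + 1) * D := Nat.mul_le_mul_right D hcoef
        _ = C * (a + 1) := hid
        _ = (a + 1) * C := by ring
    exact Nat.le_of_mul_le_mul_left h1 (by omega)
  calc (a + 2) * C + ((a + 3) * (a + 3) * D + (a + 3) * D)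
      ≤ (a + 2) * C + C := by omega
    _ = (a + 3) * C := by ring

end arith


section counting2
variable {n k : ℕ}

/-- Star bound: if all sets share `x ∉ Z` and all meet `Z`, `|F| ≤ k·C(n-2,k-2)`. -/
lemma star_bound (F : Finset (Finset (Fin n))) (hc : ∀ C ∈ F, C.card = k)
    (Z : Finset (Fin n)) (hZ : Z.card = k) (x : Fin n) (hx : ∀ C ∈ F, x ∈ C)
    (hxZ : x ∉ Z) (hmZ : ∀ C ∈ F, (C ∩ Z).Nonempty) :
    F.card ≤ k * (n - 2).choose (k - 2) := by
  classical
  have hsub : F ⊆ Z.biUnion (fun z => F.filter (fun C => x ∈ C ∧ z ∈ C)) := by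
    intro C hC
    obtain ⟨z, hz⟩ := hmZ C hC
    rw [Finset.mem_inter] at hz
    exact Finset.mem_biUnion.mpr ⟨z, hz.2, Finset.mem_filter.mpr ⟨hC, hx C hC, hz.1⟩⟩
  calc F.card ≤ (Z.biUnion (fun z => F.filter (fun C => x ∈ C ∧ z ∈ C))).card :=
        Finset.card_le_card hsub
    _ ≤ ∑ z ∈ Z, (F.filter (fun C => x ∈ C ∧ z ∈ C)).card := Finset.card_biUnion_le
    _ ≤ ∑ _z ∈ Z, (n - 2).choose (k - 2) := by
        apply Finset.sum_le_sum
        intro z hz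
        exact count_pair F hc (fun h => hxZ (h ▸ hz))
    _ = k * (n - 2).choose (k - 2) := by rw [Finset.sum_const, hZ, smul_eq_mul]

end counting2


section counting3
variable {n k : ℕ}

/-- Case where some `a₀ ∈ A` together with two elements of `B` "covers" the family. -/
lemma cover_bound (hk : 3 ≤ k) (hn : 2 * k ^ 2 * (k - 1) ≤ n)
    (F : Finset (Finset (Fin n))) (hc : ∀ C ∈ F, C.card = k)
    (hint : ∀ C ∈ F, ∀ D ∈ F, (C ∩ D).Nonempty)
    (A B : Finset (Fin n)) (hA : A.card = k) (hB : B.card = k)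
    (hAB : Disjoint A B)
    (hmA : ∀ C ∈ F, (C ∩ A).Nonempty) (hmB : ∀ C ∈ F, (C ∩ B).Nonempty)
    (a₀ : Fin n) (ha₀ : a₀ ∈ A) {b₁ b₂ : Fin n} (hb₁ : b₁ ∈ B) (hb₂ : b₂ ∈ B)
    (hbb : b₁ ≠ b₂)
    (hcov : ∀ E ∈ F, a₀ ∈ E ∨ (b₁ ∈ E ∧ b₂ ∈ E))
    (hns : ∃ D ∈ F, a₀ ∉ D) :
    F.card ≤ k * (n - 2).choose (k - 2) := by
  classical
  obtain ⟨D, hDF, hDa⟩ := hns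
  -- F splits into sets containing a₀ and sets not containing a₀
  have hsplit : F.card ≤ (F.filter (fun C => a₀ ∈ C)).card
      + (F.filter (fun C => a₀ ∉ C)).card := by
    rw [← Finset.card_filter_add_card_filter_not (p := fun C => a₀ ∈ C)]
  -- bound the plus part
  have hplus : (F.filter (fun C => a₀ ∈ C)).card
      ≤ (k - 1) * (n - 2).choose (k - 2) + k * k * (n - 3).choose (k - 3) := by
    have hsub : F.filter (fun C => a₀ ∈ C) ⊆
        ((D ∩ B).biUnion (fun w => F.filter (fun C => a₀ ∈ C ∧ w ∈ C)))
        ∪ ((D \ B).biUnion (fun w => B.biUnion (fun z =>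
            F.filter (fun C => a₀ ∈ C ∧ w ∈ C ∧ z ∈ C)))) := by
      intro C hC
      rw [Finset.mem_filter] at hC
      obtain ⟨hCF, hCa⟩ := hC
      obtain ⟨w, hw⟩ := hint C hCF D hDF
      rw [Finset.mem_inter] at hw
      by_cases hwB : w ∈ B
      · exact Finset.mem_union_left _ (Finset.mem_biUnion.mpr
          ⟨w, Finset.mem_inter.mpr ⟨hw.2, hwB⟩,
            Finset.mem_filter.mpr ⟨hCF, hCa, hw.1⟩⟩)
      · obtain ⟨z, hz⟩ := hmB C hCF
        rw [Finset.mem_inter] at hz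
        exact Finset.mem_union_right _ (Finset.mem_biUnion.mpr
          ⟨w, Finset.mem_sdiff.mpr ⟨hw.2, hwB⟩, Finset.mem_biUnion.mpr
            ⟨z, hz.2, Finset.mem_filter.mpr ⟨hCF, hCa, hw.1, hz.1⟩⟩⟩)
    calc (F.filter (fun C => a₀ ∈ C)).card
        ≤ _ := Finset.card_le_card hsub
      _ ≤ ((D ∩ B).biUnion (fun w => F.filter (fun C => a₀ ∈ C ∧ w ∈ C))).card
          + ((D \ B).biUnion (fun w => B.biUnion (fun z =>
              F.filter (fun C => a₀ ∈ C ∧ w ∈ C ∧ z ∈ C)))).card :=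
          Finset.card_union_le _ _
      _ ≤ (k - 1) * (n - 2).choose (k - 2) + k * k * (n - 3).choose (k - 3) := by
          gcongr ?_ + ?_
          · calc ((D ∩ B).biUnion (fun w => F.filter (fun C => a₀ ∈ C ∧ w ∈ C))).card
                ≤ ∑ w ∈ D ∩ B, (F.filter (fun C => a₀ ∈ C ∧ w ∈ C)).card :=
                Finset.card_biUnion_le
              _ ≤ ∑ _w ∈ D ∩ B, (n - 2).choose (k - 2) := by
                  apply Finset.sum_le_sum
                  intro w hw
                  rw [Finset.mem_inter] at hw
                  exact count_pair F hc (fun h => hDa (h ▸ hw.1))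
              _ = (D ∩ B).card * (n - 2).choose (k - 2) := by
                  rw [Finset.sum_const, smul_eq_mul]
              _ ≤ (k - 1) * (n - 2).choose (k - 2) := by
                  apply Nat.mul_le_mul_right
                  -- |D ∩ B| ≤ k - 1 since D meets A
                  obtain ⟨t, ht⟩ := hmA D hDF
                  rw [Finset.mem_inter] at ht
                  have htB : t ∉ B := Finset.disjoint_left.mp hAB ht.2
                  have : D ∩ B ⊆ D.erase t := by
                    intro u hu
                    rw [Finset.mem_inter] at hu
                    exact Finset.mem_erase.mpr ⟨fun h => htB (h ▸ hu.2), hu.1⟩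
                  calc (D ∩ B).card ≤ (D.erase t).card := Finset.card_le_card this
                    _ = D.card - 1 := Finset.card_erase_of_mem ht.1
                    _ = k - 1 := by rw [hc D hDF]
          · calc ((D \ B).biUnion (fun w => B.biUnion (fun z =>
                  F.filter (fun C => a₀ ∈ C ∧ w ∈ C ∧ z ∈ C)))).card
                ≤ ∑ w ∈ D \ B, (B.biUnion (fun z =>
                    F.filter (fun C => a₀ ∈ C ∧ w ∈ C ∧ z ∈ C))).card :=
                Finset.card_biUnion_le
              _ ≤ ∑ _w ∈ D \ B, k * (n - 3).choose (k - 3) := by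
                  apply Finset.sum_le_sum
                  intro w hw
                  rw [Finset.mem_sdiff] at hw
                  calc (B.biUnion (fun z =>
                      F.filter (fun C => a₀ ∈ C ∧ w ∈ C ∧ z ∈ C))).card
                      ≤ ∑ z ∈ B, (F.filter (fun C => a₀ ∈ C ∧ w ∈ C ∧ z ∈ C)).card :=
                      Finset.card_biUnion_le
                    _ ≤ ∑ _z ∈ B, (n - 3).choose (k - 3) := by
                        apply Finset.sum_le_sum
                        intro z hz
                        have h1 : a₀ ≠ w := fun h => hDa (h ▸ hw.1)
                        have h2 : a₀ ≠ z := fun h =>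
                          Finset.disjoint_left.mp hAB ha₀ (h ▸ hz)
                        have h3 : w ≠ z := fun h => hw.2 (h ▸ hz)
                        exact count_triple F hc h1 h2 h3
                    _ = B.card * (n - 3).choose (k - 3) := by
                        rw [Finset.sum_const, smul_eq_mul]
                    _ = k * (n - 3).choose (k - 3) := by rw [hB]
              _ = (D \ B).card * (k * (n - 3).choose (k - 3)) := by
                  rw [Finset.sum_const, smul_eq_mul]
              _ ≤ k * (k * (n - 3).choose (k - 3)) := by
                  apply Nat.mul_le_mul_right
                  calc (D \ B).card ≤ D.card := Finset.card_le_card (Finset.sdiff_subset)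
                    _ = k := hc D hDF
              _ = k * k * (n - 3).choose (k - 3) := by ring
  -- bound the minus part
  have hminus : (F.filter (fun C => a₀ ∉ C)).card ≤ k * (n - 3).choose (k - 3) := by
    have hsub : F.filter (fun C => a₀ ∉ C) ⊆
        A.biUnion (fun a => F.filter (fun C => b₁ ∈ C ∧ b₂ ∈ C ∧ a ∈ C)) := by
      intro C hC
      rw [Finset.mem_filter] at hC
      obtain ⟨hCF, hCa⟩ := hC
      obtain ⟨hc1, hc2⟩ := (hcov C hCF).resolve_left hCa
      obtain ⟨t, ht⟩ := hmA C hCF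
      rw [Finset.mem_inter] at ht
      exact Finset.mem_biUnion.mpr ⟨t, ht.2, Finset.mem_filter.mpr ⟨hCF, hc1, hc2, ht.1⟩⟩
    calc (F.filter (fun C => a₀ ∉ C)).card ≤ _ := Finset.card_le_card hsub
      _ ≤ ∑ a ∈ A, (F.filter (fun C => b₁ ∈ C ∧ b₂ ∈ C ∧ a ∈ C)).card :=
          Finset.card_biUnion_le
      _ ≤ ∑ _a ∈ A, (n - 3).choose (k - 3) := by
          apply Finset.sum_le_sum
          intro a ha
          have h1 : b₁ ≠ a := fun h => Finset.disjoint_left.mp hAB ha (h ▸ hb₁)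
          have h2 : b₂ ≠ a := fun h => Finset.disjoint_left.mp hAB ha (h ▸ hb₂)
          exact count_triple F hc hbb h1 h2
      _ = k * (n - 3).choose (k - 3) := by rw [Finset.sum_const, smul_eq_mul, hA]
  calc F.card ≤ _ := hsplit
    _ ≤ ((k - 1) * (n - 2).choose (k - 2) + k * k * (n - 3).choose (k - 3))
        + k * (n - 3).choose (k - 3) := by omega
    _ ≤ k * (n - 2).choose (k - 2) := by
        have := arith_cover hk hn
        omega


end counting3


section counting4
variable {n k : ℕ}

/-- The main combinatorial bound: an intersecting family of `k`-sets all whose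
members meet two disjoint `k`-sets `A` and `B` has size at most `k·C(n-2,k-2)`. -/
lemma main_bound (hk : 2 ≤ k) (hn : 2 * k ^ 2 * (k - 1) ≤ n)
    (F : Finset (Finset (Fin n))) (hc : ∀ C ∈ F, C.card = k)
    (hint : ∀ C ∈ F, ∀ D ∈ F, (C ∩ D).Nonempty)
    (A B : Finset (Fin n)) (hA : A.card = k) (hB : B.card = k)
    (hAB : Disjoint A B)
    (hmA : ∀ C ∈ F, (C ∩ A).Nonempty) (hmB : ∀ C ∈ F, (C ∩ B).Nonempty) :
    F.card ≤ k * (n - 2).choose (k - 2) := by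
  classical
  by_cases hstar : ∃ x, ∀ C ∈ F, x ∈ C
  · obtain ⟨x, hx⟩ := hstar
    by_cases hxB : x ∈ B
    · have hxA : x ∉ A := Finset.disjoint_right.mp hAB hxB
      exact star_bound F hc A hA x hx hxA hmA
    · exact star_bound F hc B hB x hx hxB hmB
  push_neg at hstar
  -- non-star case
  rcases Nat.lt_or_ge k 3 with hk2 | hk3
  · -- k = 2 : family must be empty
    have hkk : k = 2 := by omega
    have hFe : F = ∅ := by
      by_contra hne
      obtain ⟨C₁, hC₁⟩ := Finset.nonempty_iff_ne_empty.mpr hne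
      obtain ⟨a, ha⟩ := hmA C₁ hC₁
      obtain ⟨b, hb⟩ := hmB C₁ hC₁
      rw [Finset.mem_inter] at ha hb
      have hab : a ≠ b := fun h => Finset.disjoint_left.mp hAB ha.2 (h ▸ hb.2)
      have hC₁eq : C₁ = {a, b} := by
        apply (Finset.eq_of_subset_of_card_le _ _).symm
        · intro u hu
          rw [Finset.mem_insert, Finset.mem_singleton] at hu
          rcases hu with rfl | rfl
          · exact ha.1
          · exact hb.1
        · rw [hc C₁ hC₁, hkk, Finset.card_pair hab]
      -- witnesses
      obtain ⟨Da, hDaF, hDaa⟩ := hstar a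
      obtain ⟨Db, hDbF, hDbb⟩ := hstar b
      -- b ∈ Da
      have hbDa : b ∈ Da := by
        obtain ⟨w, hw⟩ := hint Da hDaF C₁ hC₁
        rw [Finset.mem_inter, hC₁eq, Finset.mem_insert, Finset.mem_singleton] at hw
        rcases hw.2 with rfl | rfl
        · exact absurd hw.1 hDaa
        · exact hw.1
      have haDb : a ∈ Db := by
        obtain ⟨w, hw⟩ := hint Db hDbF C₁ hC₁
        rw [Finset.mem_inter, hC₁eq, Finset.mem_insert, Finset.mem_singleton] at hw
        rcases hw.2 with rfl | rfl
        · exact hw.1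
        · exact absurd hw.1 hDbb
      -- Da = {α, b} with α ∈ A, Db = {a, β} with β ∈ B
      obtain ⟨α, hα⟩ := hmA Da hDaF
      rw [Finset.mem_inter] at hα
      obtain ⟨β, hβ⟩ := hmB Db hDbF
      rw [Finset.mem_inter] at hβ
      have hαb : α ≠ b := fun h => Finset.disjoint_left.mp hAB hα.2 (h ▸ hb.2)
      have haβ : a ≠ β := fun h => Finset.disjoint_left.mp hAB ha.2 (h ▸ hβ.2)
      have hDaeq : Da = {α, b} := by
        apply (Finset.eq_of_subset_of_card_le _ _).symm
        · intro u hu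
          rw [Finset.mem_insert, Finset.mem_singleton] at hu
          rcases hu with rfl | rfl
          · exact hα.1
          · exact hbDa
        · rw [hc Da hDaF, hkk, Finset.card_pair hαb]
      have hDbeq : Db = {a, β} := by
        apply (Finset.eq_of_subset_of_card_le _ _).symm
        · intro u hu
          rw [Finset.mem_insert, Finset.mem_singleton] at hu
          rcases hu with rfl | rfl
          · exact haDb
          · exact hβ.1
        · rw [hc Db hDbF, hkk, Finset.card_pair haβ]
      -- Da ∩ Db = ∅, contradiction
      obtain ⟨w, hw⟩ := hint Da hDaF Db hDbF
      rw [Finset.mem_inter, hDaeq, hDbeq] at hw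
      simp only [Finset.mem_insert, Finset.mem_singleton] at hw
      have hαa : α ≠ a := fun h => hDaa (hDaeq ▸ by simp [h])
      have hbβ : b ≠ β := fun h => hDbb (hDbeq ▸ by simp [h])
      have hαβ : α ≠ β := fun h => Finset.disjoint_left.mp hAB hα.2 (h ▸ hβ.2)
      have hba : b ≠ a := hab.symm
      rcases hw.1 with rfl | rfl <;> rcases hw.2 with h | h <;> simp_all
    simp [hFe]
  -- k ≥ 3, non-star case: heavy pair analysis
  set Dd := (n - 3).choose (k - 3) with hDd
  set f : Fin n × Fin n → ℕ :=
    fun p => (F.filter (fun C => p.1 ∈ C ∧ p.2 ∈ C)).card with hf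
  -- C1 : heavy pairs are covers
  have hC1 : ∀ p : Fin n × Fin n, p.1 ∈ A → p.2 ∈ B → k * Dd < f p →
      ∀ E ∈ F, p.1 ∈ E ∨ p.2 ∈ E := by
    rintro ⟨a, b⟩ haA hbB hheavy E hEF
    by_contra hcon
    push_neg at hcon
    have hsub : F.filter (fun C => a ∈ C ∧ b ∈ C) ⊆
        E.biUnion (fun w => F.filter (fun C => a ∈ C ∧ b ∈ C ∧ w ∈ C)) := by
      intro C hC
      rw [Finset.mem_filter] at hC
      obtain ⟨w, hw⟩ := hint C hC.1 E hEF
      rw [Finset.mem_inter] at hw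
      exact Finset.mem_biUnion.mpr ⟨w, hw.2,
        Finset.mem_filter.mpr ⟨hC.1, hC.2.1, hC.2.2, hw.1⟩⟩
    have : f (a, b) ≤ k * Dd := by
      calc f (a, b) ≤ (E.biUnion (fun w =>
            F.filter (fun C => a ∈ C ∧ b ∈ C ∧ w ∈ C))).card :=
          Finset.card_le_card hsub
        _ ≤ ∑ w ∈ E, (F.filter (fun C => a ∈ C ∧ b ∈ C ∧ w ∈ C)).card :=
          Finset.card_biUnion_le
        _ ≤ ∑ _w ∈ E, Dd := by
            apply Finset.sum_le_sum
            intro w hw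
            have h1 : a ≠ b := fun h => Finset.disjoint_left.mp hAB haA (h ▸ hbB)
            have h2 : a ≠ w := fun h => hcon.1 (h ▸ hw)
            have h3 : b ≠ w := fun h => hcon.2 (h ▸ hw)
            exact count_triple F hc h1 h2 h3
        _ = k * Dd := by rw [Finset.sum_const, smul_eq_mul, hc E hEF]
    omega
  by_cases h1 : ∃ a₀ ∈ A, ∃ b₁ ∈ B, ∃ b₂ ∈ B, b₁ ≠ b₂ ∧
      k * Dd < f (a₀, b₁) ∧ k * Dd < f (a₀, b₂)
  · obtain ⟨a₀, ha₀, b₁, hb₁, b₂, hb₂, hbb, hh1, hh2⟩ := h1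
    refine cover_bound hk3 hn F hc hint A B hA hB hAB hmA hmB a₀ ha₀ hb₁ hb₂ hbb
      (fun E hE => ?_) (hstar a₀)
    rcases Classical.em (a₀ ∈ E) with h | h
    · exact Or.inl h
    · exact Or.inr ⟨(hC1 (a₀, b₁) ha₀ hb₁ hh1 E hE).resolve_left h,
        (hC1 (a₀, b₂) ha₀ hb₂ hh2 E hE).resolve_left h⟩
  by_cases h2 : ∃ b₀ ∈ B, ∃ a₁ ∈ A, ∃ a₂ ∈ A, a₁ ≠ a₂ ∧
      k * Dd < f (a₁, b₀) ∧ k * Dd < f (a₂, b₀)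
  · obtain ⟨b₀, hb₀, a₁, ha₁, a₂, ha₂, haa, hh1, hh2⟩ := h2
    refine cover_bound hk3 hn F hc hint B A hB hA hAB.symm hmB hmA b₀ hb₀
      ha₁ ha₂ haa (fun E hE => ?_) (hstar b₀)
    rcases Classical.em (b₀ ∈ E) with h | h
    · exact Or.inl h
    · exact Or.inr ⟨(hC1 (a₁, b₀) ha₁ hb₀ hh1 E hE).resolve_right h,
        (hC1 (a₂, b₀) ha₂ hb₀ hh2 E hE).resolve_right h⟩
  -- at most one heavy pair
  have huniq : ∀ p q : Fin n × Fin n, p.1 ∈ A → p.2 ∈ B → q.1 ∈ A → q.2 ∈ B →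
      k * Dd < f p → k * Dd < f q → p = q := by
    intro p q hpA hpB hqA hqB hp hq
    have hkey : p.1 = q.1 ∨ p.2 = q.2 := by
      by_contra hcon
      push_neg at hcon
      obtain ⟨hne1, hne2⟩ := hcon
      -- find C containing q.1, q.2 but neither p.1 nor p.2
      set X := F.filter (fun C => q.1 ∈ C ∧ q.2 ∈ C) with hX
      set Y := X.filter (fun C => p.1 ∈ C ∨ p.2 ∈ C) with hY
      have hYle : Y.card ≤ 2 * Dd := by
        have hsub : Y ⊆ (F.filter (fun C => q.1 ∈ C ∧ q.2 ∈ C ∧ p.1 ∈ C))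
            ∪ (F.filter (fun C => q.1 ∈ C ∧ q.2 ∈ C ∧ p.2 ∈ C)) := by
          intro C hC
          simp only [hY, hX, Finset.mem_filter] at hC
          rcases hC.2 with h | h
          · exact Finset.mem_union_left _
              (Finset.mem_filter.mpr ⟨hC.1.1, hC.1.2.1, hC.1.2.2, h⟩)
          · exact Finset.mem_union_right _
              (Finset.mem_filter.mpr ⟨hC.1.1, hC.1.2.1, hC.1.2.2, h⟩)
        have hqq : q.1 ≠ q.2 := fun h => Finset.disjoint_left.mp hAB hqA (h ▸ hqB)
        have e1 : (F.filter (fun C => q.1 ∈ C ∧ q.2 ∈ C ∧ p.1 ∈ C)).card ≤ Dd :=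
          count_triple F hc hqq (fun h => hne1 h.symm)
            (fun h => Finset.disjoint_left.mp hAB hpA (h.symm ▸ hqB))
        have e2 : (F.filter (fun C => q.1 ∈ C ∧ q.2 ∈ C ∧ p.2 ∈ C)).card ≤ Dd :=
          count_triple F hc hqq
            (fun h => Finset.disjoint_left.mp hAB hqA (h ▸ hpB)) (fun h => hne2 h.symm)
        calc Y.card ≤ _ := Finset.card_le_card hsub
          _ ≤ _ := Finset.card_union_le _ _
          _ ≤ 2 * Dd := by omega
      have hXq : X.card = f q := rfl
      have hXY : Y.card < X.card := by
        have h2k : 2 * Dd ≤ k * Dd := Nat.mul_le_mul_right Dd (by omega)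
        omega
      have hZne : ∃ C ∈ X, p.1 ∉ C ∧ p.2 ∉ C := by
        by_contra hno
        push_neg at hno
        have hXsubY : X ⊆ Y := fun C hC => Finset.mem_filter.mpr
          ⟨hC, or_iff_not_imp_left.mpr (hno C hC)⟩
        exact absurd (Finset.card_le_card hXsubY) (not_le.mpr hXY)
      obtain ⟨C, hCX, hC1', hC2'⟩ := hZne
      rw [hX, Finset.mem_filter] at hCX
      rcases hC1 p hpA hpB hp C hCX.1 with h | h
      · exact hC1' h
      · exact hC2' h
    rcases hkey with hkey | hkey
    · by_contra hne
      have hne2 : p.2 ≠ q.2 := by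
        intro h
        exact hne (Prod.ext hkey h)
      exact h1 ⟨p.1, hpA, p.2, hpB, q.2, hqB, hne2, by simpa using hp,
        by rw [hkey]; simpa using hq⟩
    · by_contra hne
      have hne1 : p.1 ≠ q.1 := by
        intro h
        exact hne (Prod.ext h hkey)
      exact h2 ⟨p.2, hpB, p.1, hpA, q.1, hqA, hne1, by simpa using hp,
        by rw [hkey]; simpa using hq⟩
  -- final counting
  have hcover : F ⊆ (A ×ˢ B).biUnion
      (fun p => F.filter (fun C => p.1 ∈ C ∧ p.2 ∈ C)) := by
    intro C hC
    obtain ⟨a, ha⟩ := hmA C hC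
    obtain ⟨b, hb⟩ := hmB C hC
    rw [Finset.mem_inter] at ha hb
    exact Finset.mem_biUnion.mpr ⟨(a, b), Finset.mem_product.mpr ⟨ha.2, hb.2⟩,
      Finset.mem_filter.mpr ⟨hC, ha.1, hb.1⟩⟩
  have hsum : F.card ≤ ∑ p ∈ A ×ˢ B, f p :=
    le_trans (Finset.card_le_card hcover) Finset.card_biUnion_le
  have hABcard : (A ×ˢ B).card = k * k := by
    rw [Finset.card_product, hA, hB]
  have hfinal : ∑ p ∈ A ×ˢ B, f p
      ≤ (n - 2).choose (k - 2) + k * k * (k * Dd) := by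
    by_cases hex : ∃ p ∈ A ×ˢ B, k * Dd < f p
    · obtain ⟨p, hpAB, hp⟩ := hex
      obtain ⟨hpA, hpB⟩ := Finset.mem_product.mp hpAB
      have hsplit : ∑ q ∈ A ×ˢ B, f q = f p + ∑ q ∈ (A ×ˢ B).erase p, f q :=
        (Finset.add_sum_erase _ f hpAB).symm
      have hfp : f p ≤ (n - 2).choose (k - 2) :=
        count_pair F hc (fun h => Finset.disjoint_left.mp hAB hpA (h ▸ hpB))
      have herase : ∑ q ∈ (A ×ˢ B).erase p, f q ≤ (k * k) * (k * Dd) := by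
        calc ∑ q ∈ (A ×ˢ B).erase p, f q ≤ ((A ×ˢ B).erase p).card • (k * Dd) := by
              apply Finset.sum_le_card_nsmul
              intro q hq
              rw [Finset.mem_erase] at hq
              obtain ⟨hqA, hqB⟩ := Finset.mem_product.mp hq.2
              by_contra hcon
              push_neg at hcon
              exact hq.1 (huniq q p hqA hqB hpA hpB hcon hp)
          _ ≤ (A ×ˢ B).card • (k * Dd) := by
              rw [smul_eq_mul, smul_eq_mul]
              exact Nat.mul_le_mul_right _
                (Finset.card_le_card (Finset.erase_subset _ _))
          _ = (k * k) * (k * Dd) := by rw [hABcard, smul_eq_mul]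
      omega
    · push_neg at hex
      calc ∑ p ∈ A ×ˢ B, f p ≤ (A ×ˢ B).card • (k * Dd) :=
            Finset.sum_le_card_nsmul _ _ _ hex
        _ = k * k * (k * Dd) := by rw [hABcard, smul_eq_mul]
        _ ≤ (n - 2).choose (k - 2) + k * k * (k * Dd) := Nat.le_add_left _ _
  have h_arith := arith_main hk3 hn
  rw [hDd] at hfinal
  omega


end counting4


-- extraction of an adjacent pair from two distinct maximal independent sets
lemma exists_adj_pair {V : Type*} (G : SimpleGraph V) (M₁ M₂ : Set V)
    (h1 : Maximal (IsIndep G) M₁) (h2 : Maximal (IsIndep G) M₂) (hne : M₁ ≠ M₂) :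
    ∃ a b, G.Adj a b ∧ a ∈ M₁ ∧ a ∉ M₂ ∧ b ∈ M₂ := by
  have hex : ∃ a ∈ M₁, a ∉ M₂ := by
    by_contra hno
    push_neg at hno
    have hsub : M₁ ⊆ M₂ := hno
    exact hne (le_antisymm hsub (h1.2 h2.1 hsub))
  obtain ⟨a, haM₁, haM₂⟩ := hex
  have hnotind : ¬ IsIndep G (insert a M₂) := by
    intro hind
    exact haM₂ (h2.2 hind (Set.subset_insert a M₂) (Set.mem_insert a M₂))
  unfold IsIndep at hnotind
  push_neg at hnotind
  obtain ⟨u, hu, v, hv, huv⟩ := hnotind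
  rcases Set.mem_insert_iff.mp hu with rfl | hu₂
  · rcases Set.mem_insert_iff.mp hv with rfl | hv₂
    · exact absurd huv (G.loopless.irrefl _)
    · exact ⟨u, v, huv, haM₁, haM₂, hv₂⟩
  · rcases Set.mem_insert_iff.mp hv with rfl | hv₂
    · exact ⟨v, u, huv.symm, haM₁, haM₂, hu₂⟩
    · exact absurd huv (h2.1 hu₂ hv₂)



lemma part_bound (n k : ℕ) (hk : 2 ≤ k) (hn : 2 * k ^ 2 * (k - 1) ≤ n)
    (s : Finset {A : Finset (Fin n) // A.card = k})
    (Fp : Finset ↥(s : Set {A : Finset (Fin n) // A.card = k}))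
    (hfree : FreeIndep ((kneser n k).induce (s : Set _)) (Fp : Set _)) :
    Fp.card ≤ k * (n - 2).choose (k - 2) := by
  classical
  obtain ⟨hind, M₁, M₂, hne, hsub₁, hsub₂, hmax₁, hmax₂⟩ := hfree
  obtain ⟨va, vb, hadj, haM₁, haM₂, hbM₂⟩ :=
    exists_adj_pair ((kneser n k).induce (s : Set _)) M₁ M₂ hmax₁ hmax₂ hne
  have hadj' : Disjoint va.1.1 vb.1.1 ∧ va.1 ≠ vb.1 := hadj
  set Fam : Finset (Finset (Fin n)) := Fp.image (fun v => v.1.1) with hFam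
  have hinj : Function.Injective
      (fun v : ↥(s : Set {A : Finset (Fin n) // A.card = k}) => v.1.1) := by
    intro u v h
    exact Subtype.ext (Subtype.ext h)
  have hcardeq : Fam.card = Fp.card := Finset.card_image_of_injective _ hinj
  -- members of Fp are in both M₁ and M₂
  have hM₁ : ∀ v ∈ Fp, v ∈ M₁ := fun v hv => hsub₁ (Finset.mem_coe.mpr hv)
  have hM₂ : ∀ v ∈ Fp, v ∈ M₂ := fun v hv => hsub₂ (Finset.mem_coe.mpr hv)
  have hc : ∀ C ∈ Fam, C.card = k := by
    intro C hC
    obtain ⟨v, hv, rfl⟩ := Finset.mem_image.mp hC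
    exact v.1.2
  have hkpos : 0 < k := by omega
  have hint : ∀ C ∈ Fam, ∀ D ∈ Fam, (C ∩ D).Nonempty := by
    intro C hC D hD
    obtain ⟨u, hu, rfl⟩ := Finset.mem_image.mp hC
    obtain ⟨v, hv, rfl⟩ := Finset.mem_image.mp hD
    by_cases huv : u.1.1 = v.1.1
    · rw [← huv, Finset.inter_self, ← Finset.card_pos, u.1.2]
      exact hkpos
    · have hnadj := hmax₁.1 (hM₁ u hu) (hM₁ v hv)
      have hne1 : u.1 ≠ v.1 := fun h => huv (congrArg Subtype.val h)
      rw [← Finset.not_disjoint_iff_nonempty_inter]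
      exact fun hd => hnadj ⟨hd, hne1⟩
  have hmA : ∀ C ∈ Fam, (C ∩ va.1.1).Nonempty := by
    intro C hC
    obtain ⟨u, hu, rfl⟩ := Finset.mem_image.mp hC
    have hune : u ≠ va := fun h => haM₂ (h ▸ hM₂ u hu)
    have hnadj := hmax₁.1 (hM₁ u hu) haM₁
    have hne1 : u.1 ≠ va.1 := fun h => hune (Subtype.ext h)
    rw [← Finset.not_disjoint_iff_nonempty_inter]
    exact fun hd => hnadj ⟨hd, hne1⟩
  have hmB : ∀ C ∈ Fam, (C ∩ vb.1.1).Nonempty := by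
    intro C hC
    obtain ⟨u, hu, rfl⟩ := Finset.mem_image.mp hC
    have hune : u ≠ vb := by
      intro h
      exact hmax₁.1 haM₁ (h ▸ hM₁ u hu) hadj
    have hnadj := hmax₂.1 (hM₂ u hu) hbM₂
    have hne1 : u.1 ≠ vb.1 := fun h => hune (Subtype.ext h)
    rw [← Finset.not_disjoint_iff_nonempty_inter]
    exact fun hd => hnadj ⟨hd, hne1⟩
  rw [← hcardeq]
  exact main_bound hk hn Fam hc hint va.1.1 vb.1.1 va.1.2 vb.1.2 hadj'.1 hmA hmB

lemma kneser_colorable (n k : ℕ) (hk : 2 ≤ k) (hkn : 2 * k + 2 ≤ n)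
    (s : Finset {A : Finset (Fin n) // A.card = k}) :
    ((kneser n k).induce (s : Set _)).Colorable (n - 2 * k + 2) := by
  classical
  have hne : ∀ v : ↥(s : Set {A : Finset (Fin n) // A.card = k}),
      v.1.1.Nonempty := fun v => Finset.card_pos.mp (by rw [v.1.2]; omega)
  refine ⟨SimpleGraph.Coloring.mk
    (fun v => ⟨min (v.1.1.min' (hne v)).val (n - 2 * k + 1), by omega⟩) ?_⟩
  intro u v huv heq
  have hadj : Disjoint u.1.1 v.1.1 ∧ u.1 ≠ v.1 := huv
  have hval : min (u.1.1.min' (hne u)).val (n - 2 * k + 1)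
      = min (v.1.1.min' (hne v)).val (n - 2 * k + 1) := congrArg Fin.val heq
  set a := (u.1.1.min' (hne u)).val with ha
  set b := (v.1.1.min' (hne v)).val with hb
  set c := n - 2 * k + 1 with hcc
  rcases Nat.lt_or_ge a c with h1 | h1 <;> rcases Nat.lt_or_ge b c with h2 | h2
  · -- both small: minima are equal elements
    rw [min_eq_left (Nat.le_of_lt h1), min_eq_left (Nat.le_of_lt h2)] at hval
    have hmin : u.1.1.min' (hne u) = v.1.1.min' (hne v) := Fin.ext hval
    have hm1 := u.1.1.min'_mem (hne u)
    have hm2 := v.1.1.min'_mem (hne v)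
    rw [hmin] at hm1
    exact Finset.disjoint_left.mp hadj.1 hm1 hm2
  · rw [min_eq_left (Nat.le_of_lt h1), min_eq_right h2] at hval
    omega
  · rw [min_eq_right h1, min_eq_left (Nat.le_of_lt h2)] at hval
    omega
  · -- both large: too many elements in the tail
    have hsub : (u.1.1 ∪ v.1.1).image Fin.val ⊆ Finset.Ico (n - 2 * k + 1) n := by
      intro x hx
      obtain ⟨y, hy, rfl⟩ := Finset.mem_image.mp hx
      rw [Finset.mem_union] at hy
      rw [Finset.mem_Ico]
      refine ⟨?_, y.isLt⟩
      rcases hy with hy | hy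
      · calc n - 2 * k + 1 = c := rfl
          _ ≤ a := h1
          _ ≤ y.val := Finset.min'_le _ _ hy
      · calc n - 2 * k + 1 = c := rfl
          _ ≤ b := h2
          _ ≤ y.val := Finset.min'_le _ _ hy
    have hcard1 : ((u.1.1 ∪ v.1.1).image Fin.val).card = 2 * k := by
      rw [Finset.card_image_of_injective _ Fin.val_injective,
        Finset.card_union_of_disjoint hadj.1, u.1.2, v.1.2]
      omega
    have hcard2 := Finset.card_le_card hsub
    rw [hcard1, Nat.card_Ico] at hcard2
    omega



lemma choose_ident2 {n k : ℕ} (hk : 2 ≤ k) (hn : 2 ≤ n) :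
    k * ((k - 1) * n.choose k) = n * ((n - 1) * (n - 2).choose (k - 2)) := by
  have h1 : n * (n - 1).choose (k - 1) = n.choose k * k := by
    have := Nat.add_one_mul_choose_eq (n - 1) (k - 1)
    rw [show n - 1 + 1 = n by omega, show k - 1 + 1 = k by omega] at this
    exact this
  have h2 : (n - 1) * (n - 2).choose (k - 2) = (n - 1).choose (k - 1) * (k - 1) := by
    have := Nat.add_one_mul_choose_eq (n - 2) (k - 2)
    rw [show n - 2 + 1 = n - 1 by omega, show k - 2 + 1 = k - 1 by omega] at this
    exact this
  calc k * ((k - 1) * n.choose k) = (k - 1) * (n.choose k * k) := by ring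
    _ = (k - 1) * (n * (n - 1).choose (k - 1)) := by rw [h1]
    _ = n * ((n - 1).choose (k - 1) * (k - 1)) := by ring
    _ = n * ((n - 1) * (n - 2).choose (k - 2)) := by rw [h2]



theorem freeChrom_of_large_induced_subgraph (n k : ℕ) (hk : 2 ≤ k)
    (hn : 2 * k ^ 2 * (k - 1) ≤ n)
    (s : Finset {A : Finset (Fin n) // A.card = k})
    (hcard : (2 : ℝ) * k ^ 2 * ((k : ℝ) - 1) / n * (n.choose k) ≤ s.card) :
    (2 * n - 2 : ℕ) ≤ freeChrom _ ((kneser n k).induce (s : Set _)) ∧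
      2 * ((kneser n k).induce (s : Set _)).chromaticNumber <
        freeChrom _ ((kneser n k).induce (s : Set _)) := by
  classical
  have hkn : 2 * k + 2 ≤ n := by
    obtain ⟨a, rfl⟩ : ∃ a, k = a + 2 := ⟨k - 2, by omega⟩
    have h : 2 * (a+2) ^ 2 * (a + 1) ≤ n := by
      simpa [show a + 2 - 1 = a + 1 by omega] using hn
    nlinarith
  have hn2 : 2 ≤ n := by omega
  -- convert the real hypothesis to a natural-number one
  have hsnat : 2 * k * (n - 1) * (n - 2).choose (k - 2) ≤ s.card := by
    have hident := choose_ident2 hk hn2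
    have hr : ((k : ℝ) * (((k:ℝ) - 1) * n.choose k))
        = (n : ℝ) * ((((n:ℝ)) - 1) * (n - 2).choose (k - 2)) := by
      have := congrArg (fun m : ℕ => (m : ℝ)) hident
      push_cast at this
      rw [Nat.cast_sub (by omega : 1 ≤ k), Nat.cast_sub (by omega : 1 ≤ n)] at this
      exact_mod_cast this
    have hnpos : (0:ℝ) < n := by positivity
    have hreal : (2 * k * ((n:ℝ) - 1) * (n - 2).choose (k - 2)) ≤ s.card := by
      refine le_trans (le_of_eq ?_) hcard
      rw [div_mul_eq_mul_div, eq_comm, div_eq_iff (ne_of_gt hnpos)]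
      linear_combination (2 * (k:ℝ)) * hr
    have : ((2 * k * (n - 1) * (n - 2).choose (k - 2) : ℕ) : ℝ) ≤ (s.card : ℝ) := by
      push_cast [Nat.cast_sub (by omega : 1 ≤ n)]
      ring_nf
      ring_nf at hreal
      exact hreal
    exact_mod_cast this
  -- the lower bound on the free chromatic number
  have hphi : ((2 * n - 2 : ℕ) : ℕ∞) ≤ freeChrom _ ((kneser n k).induce (s : Set _)) := by
    apply le_sInf
    rintro m ⟨P, rfl, hPfree, hPdisj, hPsup⟩
    rw [Nat.cast_le]
    -- sum of part sizes equals s.card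
    have hsum : ∑ Fp ∈ P, Fp.card = s.card := by
      have h1 : (P.sup id).card = s.card := by
        rw [hPsup]
        simp [Finset.card_univ]
      rw [Finset.sup_eq_biUnion] at h1
      rw [← h1]
      exact (Finset.card_biUnion (fun x hx y hy hxy =>
        hPdisj (Finset.mem_coe.mpr hx) (Finset.mem_coe.mpr hy) hxy)).symm
    have hble : s.card ≤ P.card * (k * (n - 2).choose (k - 2)) := by
      rw [← hsum]
      calc ∑ Fp ∈ P, Fp.card ≤ ∑ _Fp ∈ P, k * (n - 2).choose (k - 2) :=
          Finset.sum_le_sum (fun Fp hFp => part_bound n k hk hn s Fp (hPfree Fp hFp))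
        _ = P.card * (k * (n - 2).choose (k - 2)) := by
            rw [Finset.sum_const, smul_eq_mul]
    have hchoosepos : 0 < (n - 2).choose (k - 2) := Nat.choose_pos (by omega)
    have hfin : (2 * n - 2) * (k * (n - 2).choose (k - 2))
        ≤ P.card * (k * (n - 2).choose (k - 2)) := by
      refine le_trans ?_ (le_trans hsnat hble)
      have : (2 * n - 2) * (k * (n - 2).choose (k - 2))
          = 2 * k * (n - 1) * (n - 2).choose (k - 2) := by
        have h2 : 2 * n - 2 = 2 * (n - 1) := by omega
        rw [h2]; ring
      omega
    exact Nat.le_of_mul_le_mul_right hfin (by positivity)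
  refine ⟨hphi, ?_⟩
  have hcol := kneser_colorable n k hk hkn s
  have hchrom := hcol.chromaticNumber_le
  calc 2 * ((kneser n k).induce (s : Set _)).chromaticNumber
      ≤ 2 * ((n - 2 * k + 2 : ℕ) : ℕ∞) := by
        exact mul_le_mul_right hchrom 2
    _ = ((2 * (n - 2 * k + 2) : ℕ) : ℕ∞) := by push_cast; ring
    _ < ((2 * n - 2 : ℕ) : ℕ∞) := by
        rw [Nat.cast_lt]
        omega
    _ ≤ freeChrom _ ((kneser n k).induce (s : Set _)) := hphi
end

section
/- Let G be a graph with χ_c(G) = n/d, gcd(n,d) = 1 and d ≥ 2 (equivalently χ_c(G) ≠ χ(G)). Then the free chromatic number satisfies φ(G) ≤ 2χ(G) - 1. -/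
/-- The circular complete graph `K_{n/d}`: vertex set `[n]`, with `i ~ j` iff
`d ≤ |i - j| ≤ n - d`. -/
def circK (n d : ℕ) : SimpleGraph (Fin n) where
  Adj i j := i ≠ j ∧ (d : ℤ) ≤ |(i : ℤ) - (j : ℤ)| ∧ |(i : ℤ) - (j : ℤ)| ≤ (n : ℤ) - d
  symm := by
    constructor
    rintro i j ⟨hne, h1, h2⟩
    rw [abs_sub_comm] at h1 h2
    exact ⟨hne.symm, h1, h2⟩
  loopless := by constructor; rintro i ⟨hne, -⟩; exact hne rfl

/-- The circular chromatic number: the infimum of `n/d` over all pairs `(n, d)`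
such that `G` admits a homomorphism to the circular complete graph `K_{n/d}`. -/
noncomputable def circChrom {V : Type*} (G : SimpleGraph V) : ℝ :=
  sInf {r : ℝ | ∃ n d : ℕ, 0 < d ∧ d ≤ n ∧ Nonempty (G →g circK n d) ∧ r = (n : ℝ) / (d : ℝ)}

/-! ### Auxiliary material -/

def circSet {V : Type*} (G : SimpleGraph V) : Set ℝ :=
  {r : ℝ | ∃ n d : ℕ, 0 < d ∧ d ≤ n ∧ Nonempty (G →g circK n d) ∧ r = (n : ℝ) / (d : ℝ)}

lemma circChrom_eq_sInf {V : Type*} (G : SimpleGraph V) :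
    circChrom G = sInf (circSet G) := rfl

lemma circSet_bddBelow {V : Type*} (G : SimpleGraph V) : BddBelow (circSet G) := by
  refine ⟨0, ?_⟩
  rintro r ⟨N, D, hD, hDN, hhom, rfl⟩
  positivity

lemma emod_eq_add_self {x m : ℤ} (h0 : -m ≤ x) (h1 : x < 0) : x % m = x + m := by
  have hm : 0 < m := by linarith
  have : (x + m) % m = x % m := Int.add_mul_emod_self_left x m 1 ▸ by ring_nf
  rw [← this]
  exact Int.emod_eq_of_lt (by linarith) (by linarith)

lemma circK_adj_iff {n d : ℕ} (hd : 0 < d) (i j : Fin n) :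
    (circK n d).Adj i j ↔
      (d : ℤ) ≤ ((i : ℤ) - (j : ℤ)) % n ∧ ((i : ℤ) - (j : ℤ)) % n ≤ (n : ℤ) - d := by
  have hi : (i : ℤ) < n := by exact_mod_cast i.isLt
  have hj : (j : ℤ) < n := by exact_mod_cast j.isLt
  have hi0 : (0:ℤ) ≤ i := Int.natCast_nonneg _
  have hj0 : (0:ℤ) ≤ j := Int.natCast_nonneg _
  have hne : (i ≠ j) ↔ ((i:ℤ) ≠ (j:ℤ)) := by
    constructor
    · intro h h'; exact h (Fin.ext (by exact_mod_cast h'))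
    · intro h h'; exact h (by exact_mod_cast congrArg (fun x : Fin n => ((x:ℕ):ℤ)) h')
  constructor
  · rintro ⟨h0, h1, h2⟩
    rw [hne] at h0
    rcases le_or_gt (j:ℤ) i with h | h
    · rw [abs_of_nonneg (by linarith)] at h1 h2
      rw [Int.emod_eq_of_lt (by linarith) (by linarith)]
      exact ⟨h1, h2⟩
    · rw [abs_of_neg (by linarith)] at h1 h2
      rw [emod_eq_add_self (by linarith) (by linarith)]
      constructor <;> linarith
  · rintro ⟨h1, h2⟩
    rcases le_or_gt (j:ℤ) i with h | h
    · rw [Int.emod_eq_of_lt (by linarith) (by linarith)] at h1 h2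
      refine ⟨hne.2 (by intro h'; rw [h'] at h1; simp at h1; omega), ?_, ?_⟩
      · rw [abs_of_nonneg (by linarith)]; exact h1
      · rw [abs_of_nonneg (by linarith)]; exact h2
    · rw [emod_eq_add_self (by linarith) (by linarith)] at h1 h2
      refine ⟨hne.2 (by intro h'; omega), ?_, ?_⟩
      · rw [abs_of_neg (by linarith)]; linarith
      · rw [abs_of_neg (by linarith)]; linarith

lemma emod_rev {n d : ℕ} (hd : 0 < d) (hdn : d < n) {x : ℤ}
    (h : x % n = (n : ℤ) - d) : (-x) % n = d := by
  rw [show -x = 0 - x by ring, Int.sub_emod, Int.zero_emod, h, zero_sub,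
    show -((n:ℤ) - d) = (d:ℤ) - n by ring,
    emod_eq_add_self (by omega) (by omega)]
  ring

/-- Two vertices of `circK n d` lying in a common short arc are non-adjacent. -/
lemma not_adj_near {n d : ℕ} (hd : 0 < d) (h2d : 2*d ≤ n) (base x y : Fin n)
    (hx : ((x:ℤ) - (base:ℤ)) % n ≤ (d:ℤ) - 1) (hy : ((y:ℤ) - (base:ℤ)) % n ≤ (d:ℤ) - 1) :
    ¬ (circK n d).Adj x y := by
  intro h
  rw [circK_adj_iff hd] at h
  have hn0 : (0:ℤ) < n := by exact_mod_cast lt_of_lt_of_le (by omega : 0 < 2*d) h2d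
  have hp0 : 0 ≤ ((x:ℤ) - (base:ℤ)) % n := Int.emod_nonneg _ (by omega)
  have hq0 : 0 ≤ ((y:ℤ) - (base:ℤ)) % n := Int.emod_nonneg _ (by omega)
  set p := ((x:ℤ) - (base:ℤ)) % n with hp
  set q := ((y:ℤ) - (base:ℤ)) % n with hq
  have hkey : ((x:ℤ) - y) % n = (p - q) % n := by
    rw [show (x:ℤ) - y = ((x:ℤ) - base) - ((y:ℤ) - base) by ring, Int.sub_emod]
  have h2dZ : 2*(d:ℤ) ≤ n := by exact_mod_cast h2d
  rcases le_or_gt q p with hle | hlt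
  · rw [hkey, Int.emod_eq_of_lt (by omega) (by omega)] at h
    omega
  · rw [hkey, emod_eq_add_self (by omega) (by omega)] at h
    omega

lemma IsIndep.mono {V : Type*} {G : SimpleGraph V} {S T : Set V} (h : S ⊆ T)
    (hT : IsIndep G T) : IsIndep G S := fun _ hu _ hv => hT (h hu) (h hv)

lemma exists_maximal_extension {V : Type*} [Fintype V] [DecidableEq V] {G : SimpleGraph V}
    {S : Set V} (hS : IsIndep G S) : ∃ M : Set V, S ⊆ M ∧ Maximal (IsIndep G) M := by
  classical
  let A : Finset (Finset V) :=
    Finset.univ.filter (fun T => S ⊆ (T : Set V) ∧ IsIndep G (T : Set V))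
  have hne : A.Nonempty := by
    refine ⟨S.toFinset, ?_⟩
    simp only [A, Finset.mem_filter, Finset.mem_univ, true_and, Set.coe_toFinset]
    exact ⟨le_refl _, hS⟩
  obtain ⟨M, hM, hmax⟩ := A.exists_max_image Finset.card hne
  simp only [A, Finset.mem_filter, Finset.mem_univ, true_and] at hM
  refine ⟨(M : Set V), hM.1, hM.2, ?_⟩
  intro T hT hMT
  have hTf : T.toFinset ∈ A := by
    simp only [A, Finset.mem_filter, Finset.mem_univ, true_and, Set.coe_toFinset]
    exact ⟨le_trans hM.1 (by exact_mod_cast hMT), hT⟩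
  have hcard := hmax _ hTf
  have hsub : M ⊆ T.toFinset := by
    intro x hx; rw [Set.mem_toFinset]; exact hMT hx
  have : M = T.toFinset := Finset.eq_of_subset_of_card_le hsub hcard
  rw [show T = (T.toFinset : Set V) by simp, ← this]

lemma free_of_cert {V : Type*} [Fintype V] [DecidableEq V] {G : SimpleGraph V}
    {S : Set V} {u v : V} (hu : IsIndep G (S ∪ {u})) (hv : IsIndep G (S ∪ {v}))
    (huv : G.Adj u v) : FreeIndep G S := by
  obtain ⟨M₁, hM₁s, hM₁⟩ := exists_maximal_extension hu
  obtain ⟨M₂, hM₂s, hM₂⟩ := exists_maximal_extension hv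
  refine ⟨hu.mono Set.subset_union_left, M₁, M₂, ?_,
    Set.subset_union_left.trans hM₁s, Set.subset_union_left.trans hM₂s, hM₁, hM₂⟩
  intro h
  have hu1 : u ∈ M₁ := hM₁s (Set.mem_union_right _ rfl)
  have hv2 : v ∈ M₂ := hM₂s (Set.mem_union_right _ rfl)
  rw [← h] at hv2
  exact hM₁.1 hu1 hv2 huv

noncomputable def cdist (x y : ℝ) : ℝ := min |x - y| (1 - |x - y|)

lemma round_hom {V : Type*} (G : SimpleGraph V) (n d : ℕ) (hd : 0 < d)
    (hdn : d ≤ n) (c : V → ℝ) (h0 : ∀ v, 0 ≤ c v) (h1 : ∀ v, c v < 1)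
    (hcd : ∀ u v, G.Adj u v → (d : ℝ)/(n : ℝ) ≤ cdist (c u) (c v)) :
    Nonempty (G →g circK n d) := by
  have hn : 0 < n := lt_of_lt_of_le hd hdn
  have hnR : (0:ℝ) < n := by exact_mod_cast hn
  refine ⟨⟨fun v => ⟨(⌊(n : ℝ) * c v⌋).toNat % n, Nat.mod_lt _ hn⟩, ?_⟩⟩
  intro u v huv
  rw [circK_adj_iff hd]
  have key : ∀ w : V, (((⌊(n : ℝ) * c w⌋).toNat % n : ℕ) : ℤ) = ⌊(n : ℝ) * c w⌋ := by
    intro w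
    have h₀ : (0:ℤ) ≤ ⌊(n : ℝ) * c w⌋ := Int.floor_nonneg.2 (mul_nonneg hnR.le (h0 w))
    have h₁ : ⌊(n : ℝ) * c w⌋ < (n:ℤ) := by
      have : (n:ℝ) * c w < n := by nlinarith [h1 w, h0 w]
      exact Int.floor_lt.2 (by exact_mod_cast this)
    have : (⌊(n : ℝ) * c w⌋).toNat < n := by omega
    rw [Nat.mod_eq_of_lt this]; omega
  simp only [key]
  set p := ⌊(n : ℝ) * c u⌋ with hp
  set q := ⌊(n : ℝ) * c v⌋ with hq
  have hcduv := hcd u v huv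
  have hd1 : (d:ℝ)/n ≤ 1 - |c u - c v| := le_trans hcduv (min_le_right _ _)
  have hd2 : (d:ℝ)/n ≤ |c u - c v| := le_trans hcduv (min_le_left _ _)
  have hnd : (d:ℝ) ≤ n * |c u - c v| := by
    rw [div_le_iff₀ hnR] at hd2; linarith [hd2]
  have hnd' : (n:ℝ) * |c u - c v| ≤ n - d := by
    rw [div_le_iff₀ hnR] at hd1; nlinarith
  rcases le_or_gt (c v) (c u) with h | h
  · rw [abs_of_nonneg (by linarith)] at hnd hnd'
    have l1 : (d:ℤ) + q ≤ p := by
      have : ((d:ℤ) + q : ℤ) ≤ ⌊(n:ℝ) * c v + (d:ℕ)⌋ := by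
        rw [Int.floor_add_natCast]; omega
      refine le_trans this (Int.floor_le_floor ?_)
      nlinarith
    have l2 : p ≤ q + (n - d : ℤ) := by
      have h2 : p ≤ ⌊(n:ℝ) * c v + ((n:ℝ) - d)⌋ := Int.floor_le_floor (by nlinarith)
      have h3 : ⌊(n:ℝ) * c v + ((n:ℝ) - d)⌋ = q + ((n:ℤ) - d) := by
        rw [show ((n:ℝ) - d) = (((n:ℤ) - d : ℤ) : ℝ) by push_cast; ring, Int.floor_add_intCast]
      omega
    rw [Int.emod_eq_of_lt (by omega) (by omega)]
    omega
  · rw [abs_of_neg (by linarith)] at hnd hnd'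
    have l1 : (d:ℤ) + p ≤ q := by
      have : ((d:ℤ) + p : ℤ) ≤ ⌊(n:ℝ) * c u + (d:ℕ)⌋ := by
        rw [Int.floor_add_natCast]; omega
      refine le_trans this (Int.floor_le_floor ?_)
      nlinarith
    have l2 : q ≤ p + (n - d : ℤ) := by
      have h2 : q ≤ ⌊(n:ℝ) * c u + ((n:ℝ) - d)⌋ := Int.floor_le_floor (by nlinarith)
      have h3 : ⌊(n:ℝ) * c u + ((n:ℝ) - d)⌋ = p + ((n:ℤ) - d) := by
        rw [show ((n:ℝ) - d) = (((n:ℤ) - d : ℤ) : ℝ) by push_cast; ring, Int.floor_add_intCast]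
      omega
    rw [emod_eq_add_self (by omega) (by omega)]
    omega

lemma hom_coloring {V : Type*} (G : SimpleGraph V) (N D : ℕ) (hD : 0 < D) (hDN : D ≤ N)
    (f : G →g circK N D) :
    ∃ c : V → ℝ, (∀ v, 0 ≤ c v) ∧ (∀ v, c v < 1) ∧
      (∀ u v, G.Adj u v → (D : ℝ)/(N : ℝ) ≤ cdist (c u) (c v)) := by
  have hN : 0 < N := lt_of_lt_of_le hD hDN
  have hNR : (0:ℝ) < N := by exact_mod_cast hN
  refine ⟨fun v => (f v : ℝ) / N, fun v => by positivity, fun v => ?_, fun u v huv => ?_⟩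
  · rw [div_lt_one hNR]; exact_mod_cast (f v).isLt
  · obtain ⟨hne, h1, h2⟩ := f.map_rel huv
    set A : ℤ := |(f u : ℤ) - (f v : ℤ)| with hA
    have hdiff : ((f u : ℝ)/N - (f v : ℝ)/N) = (((f u : ℤ) - (f v : ℤ) : ℤ) : ℝ)/N := by
      push_cast; ring
    have habs : |(f u : ℝ)/N - (f v : ℝ)/N| = (A : ℝ) / N := by
      rw [hdiff, abs_div, abs_of_nonneg hNR.le, hA, Int.cast_abs]
    unfold cdist
    rw [habs]
    have hAD : (D : ℝ) ≤ (A : ℝ) := by exact_mod_cast h1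
    have hAN : (A : ℝ) ≤ (N : ℝ) - D := by exact_mod_cast h2
    refine le_min ?_ ?_
    · exact div_le_div_of_nonneg_right hAD hNR.le |>.trans (le_refl _)
    · rw [show (1:ℝ) - (A:ℝ)/N = ((N:ℝ) - A)/N by field_simp]
      apply div_le_div_of_nonneg_right ?_ hNR.le
      linarith

lemma cdist_nonneg' {x y : ℝ} (hx0 : 0 ≤ x) (hx1 : x ≤ 1) (hy0 : 0 ≤ y) (hy1 : y ≤ 1) :
    0 ≤ cdist x y := by
  refine le_min (abs_nonneg _) ?_
  have h : |x - y| ≤ 1 := abs_sub_le_iff.2 ⟨by linarith, by linarith⟩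
  linarith

lemma cdist_norm {x y : ℝ} (hx0 : 0 ≤ x) (hx1 : x ≤ 1) (hy0 : 0 ≤ y) (hy1 : y ≤ 1) :
    cdist (if x = 1 then 0 else x) (if y = 1 then 0 else y) = cdist x y := by
  unfold cdist
  split_ifs with h1 h2 h2
  · subst h1; subst h2; norm_num
  · subst h1
    rw [zero_sub, abs_neg, abs_of_nonneg hy0, abs_of_nonneg (sub_nonneg.2 hy1),
      show (1:ℝ) - (1 - y) = y from by ring, min_comm]
  · subst h2
    rw [sub_zero, abs_of_nonneg hx0, abs_sub_comm, abs_of_nonneg (sub_nonneg.2 hx1),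
      show (1:ℝ) - (1 - x) = x from by ring, min_comm]
  · rfl

lemma attained {V : Type*} [Fintype V] (G : SimpleGraph V) (n d : ℕ) (hd : 0 < d)
    (hdn : d ≤ n) (hne : (circSet G).Nonempty)
    (hinf : sInf (circSet G) = (n:ℝ)/(d:ℝ)) : Nonempty (G →g circK n d) := by
  classical
  have hn : 0 < n := lt_of_lt_of_le hd hdn
  have hnR : (0:ℝ) < n := by exact_mod_cast hn
  have hdR : (0:ℝ) < d := by exact_mod_cast hd
  set K : Set (V → ℝ) := Set.pi Set.univ (fun _ : V => Set.Icc (0:ℝ) 1) with hK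
  let ι : Type _ := {s : ℝ // 0 < s ∧ s < (d:ℝ)/n}
  haveI : Nonempty ι := ⟨⟨(d:ℝ)/(2*n), by positivity,
    div_lt_div_of_pos_left hdR hnR (by linarith)⟩⟩
  let C : ι → Set (V → ℝ) := fun s =>
    K ∩ ⋂ (u : V), ⋂ (v : V), ⋂ (_ : G.Adj u v), {c : V → ℝ | s.1 ≤ cdist (c u) (c v)}
  have hCmono : ∀ s t : ι, s.1 ≤ t.1 → C t ⊆ C s := by
    intro s t hst c hc
    obtain ⟨hc1, hc2⟩ := hc
    refine ⟨hc1, ?_⟩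
    simp only [Set.mem_iInter, Set.mem_setOf_eq] at hc2 ⊢
    intro u v huv
    exact le_trans hst (hc2 u v huv)
  have hdir : Directed (· ⊇ ·) C := by
    intro s t
    rcases le_total s.1 t.1 with h | h
    · exact ⟨t, hCmono s t h, le_refl _⟩
    · exact ⟨s, le_refl _, hCmono t s h⟩
  have hnonempty : ∀ s : ι, (C s).Nonempty := by
    rintro ⟨s, hs0, hs1⟩
    have hlt : sInf (circSet G) < 1/s := by
      rw [hinf, div_lt_div_iff₀ hdR hs0]
      rw [lt_div_iff₀ hnR] at hs1
      linarith
    obtain ⟨r, ⟨N, D, hD, hDN, ⟨f⟩, rfl⟩, hr⟩ := exists_lt_of_csInf_lt hne hlt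
    obtain ⟨c, hc0, hc1, hccd⟩ := hom_coloring G N D hD hDN f
    have hND : (0:ℝ) < D := by exact_mod_cast hD
    have hNN : (0:ℝ) < N := by exact_mod_cast lt_of_lt_of_le hD hDN
    have hsD : s ≤ (D:ℝ)/N := by
      rw [div_lt_div_iff₀ hND hs0] at hr
      rw [le_div_iff₀ hNN]
      linarith
    refine ⟨c, ?_, ?_⟩
    · intro v _
      exact ⟨hc0 v, (hc1 v).le⟩
    · simp only [Set.mem_iInter, Set.mem_setOf_eq]
      intro u v huv
      exact le_trans hsD (hccd u v huv)
  have hKcompact : IsCompact K := isCompact_univ_pi (fun _ => isCompact_Icc)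
  have hKclosed : IsClosed K := isClosed_set_pi (fun _ _ => isClosed_Icc)
  have hTclosed : ∀ s : ι, IsClosed (⋂ (u : V), ⋂ (v : V), ⋂ (_ : G.Adj u v),
      {c : V → ℝ | s.1 ≤ cdist (c u) (c v)}) := by
    intro s
    refine isClosed_iInter fun u => isClosed_iInter fun v => isClosed_iInter fun _ => ?_
    have hcont : Continuous (fun c : V → ℝ => cdist (c u) (c v)) := by
      have h1 : Continuous (fun c : V → ℝ => |c u - c v|) :=
        ((continuous_apply u).sub (continuous_apply v)).abs
      exact h1.min (continuous_const.sub h1)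
    exact isClosed_le continuous_const hcont
  have hCcompact : ∀ s : ι, IsCompact (C s) := fun s =>
    hKcompact.inter_right (hTclosed s)
  have hCclosed : ∀ s : ι, IsClosed (C s) := fun s => hKclosed.inter (hTclosed s)
  obtain ⟨c, hc⟩ := IsCompact.nonempty_iInter_of_directed_nonempty_isCompact_isClosed
    C hdir hnonempty hCcompact hCclosed
  simp only [Set.mem_iInter] at hc
  have hcK : c ∈ K := (hc (Classical.arbitrary ι)).1
  have hc01 : ∀ v, 0 ≤ c v ∧ c v ≤ 1 := fun v => hcK v (Set.mem_univ v)
  have hcd : ∀ u v, G.Adj u v → (d:ℝ)/n ≤ cdist (c u) (c v) := by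
    intro u v huv
    by_contra hlt
    push_neg at hlt
    have hge0 : 0 ≤ cdist (c u) (c v) :=
      cdist_nonneg' (hc01 u).1 (hc01 u).2 (hc01 v).1 (hc01 v).2
    set s₀ : ℝ := (cdist (c u) (c v) + (d:ℝ)/n)/2 with hs₀
    have hι : 0 < s₀ ∧ s₀ < (d:ℝ)/n := by constructor <;> [linarith; linarith]
    have hmem := hc ⟨s₀, hι⟩
    have := hmem.2
    simp only [Set.mem_iInter, Set.mem_setOf_eq] at this
    have := this u v huv
    linarith
  set c' : V → ℝ := fun v => if c v = 1 then 0 else c v with hc'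
  refine round_hom G n d hd hdn c' ?_ ?_ ?_
  · intro v
    dsimp [c']
    split_ifs with h
    · norm_num
    · exact (hc01 v).1
  · intro v
    dsimp [c']
    split_ifs with h
    · norm_num
    · exact lt_of_le_of_ne (hc01 v).2 h
  · intro u v huv
    have := hcd u v huv
    dsimp [c']
    rw [cdist_norm (hc01 u).1 (hc01 u).2 (hc01 v).1 (hc01 v).2]
    exact this

lemma all_tight {V : Type*} [Fintype V] (G : SimpleGraph V) (n d : ℕ)
    (hd : 2 ≤ d) (hgcd : Nat.gcd n d = 1) (h2d : 2 * d + 1 ≤ n)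
    (f : G →g circK n d)
    (hmin : ∀ r ∈ circSet G, (n : ℝ) / (d : ℝ) ≤ r) :
    ∀ a : Fin n, ∃ u v, G.Adj u v ∧ f u = a ∧ ((f v : ℤ) - (f u : ℤ)) % n = d := by
  classical
  have hn0 : 0 < n := by omega
  haveI : NeZero n := ⟨by omega⟩
  by_contra hcon
  push_neg at hcon
  obtain ⟨a₀, ha₀⟩ := hcon
  -- levels
  set w : (ZMod n)ˣ := ZMod.unitOfCoprime d (Nat.coprime_comm.mp hgcd) with hw
  have hwd : (w : ZMod n) = (d : ZMod n) := ZMod.coe_unitOfCoprime d _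
  set L : Fin n → ℕ := fun x => ((((a₀ : ℕ) : ZMod n) - ((x : ℕ) : ZMod n)) * (↑w⁻¹ : ZMod n)).val
    with hL
  have hLlt : ∀ x, L x < n := fun x => ZMod.val_lt _
  have hstep : ∀ x y : Fin n, ((y : ℤ) - (x : ℤ)) % n = d → x ≠ a₀ → L x = L y + 1 := by
    intro x y hxy hxa
    have hcast : ((y : ℕ) : ZMod n) = ((x : ℕ) : ZMod n) + d := by
      have hmod : ((y : ℤ) - (x : ℤ)) % n = (d : ℤ) % n := by
        rw [hxy, Int.emod_eq_of_lt (by positivity) (by exact_mod_cast (by omega : d < n))]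
      have := (ZMod.intCast_eq_intCast_iff _ _ _).mpr hmod
      push_cast at this
      linear_combination this + (ZMod.natCast_self n) * 0
    set zx : ZMod n := (((a₀ : ℕ) : ZMod n) - ((x : ℕ) : ZMod n)) * (↑w⁻¹ : ZMod n) with hzx
    have hzy : (((a₀ : ℕ) : ZMod n) - ((y : ℕ) : ZMod n)) * (↑w⁻¹ : ZMod n) = zx - 1 := by
      rw [hcast, hzx]
      have : ((d : ZMod n)) * (↑w⁻¹ : ZMod n) = 1 := by
        rw [← hwd]; exact_mod_cast w.mul_inv
      ring_nf
      linear_combination -this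
    have hzx0 : zx ≠ 0 := by
      rw [hzx]
      intro h0
      have h1 : (((a₀ : ℕ) : ZMod n) - ((x : ℕ) : ZMod n)) = 0 := by
        have h2 := congrArg (fun z : ZMod n => z * (w : ZMod n)) h0
        simp only [zero_mul, mul_assoc, Units.inv_mul, mul_one] at h2
        exact h2
      apply hxa
      have hval : ((a₀ : ℕ) : ZMod n) = ((x : ℕ) : ZMod n) := by
        linear_combination h1
      have := congrArg ZMod.val hval
      rw [ZMod.val_cast_of_lt a₀.isLt, ZMod.val_cast_of_lt x.isLt] at this
      exact Fin.ext this.symm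
    have hval1 : 1 ≤ zx.val := by
      rcases Nat.eq_zero_or_pos zx.val with h | h
      · exact absurd ((ZMod.val_eq_zero _).mp h) hzx0
      · exact h
    have hcastval : ((zx.val - 1 : ℕ) : ZMod n) = zx - 1 := by
      push_cast [Nat.cast_sub hval1]
      rw [ZMod.natCast_val, ZMod.cast_id]
    have hLy : L y = zx.val - 1 := by
      show ((((a₀ : ℕ) : ZMod n) - ((y : ℕ) : ZMod n)) * (↑w⁻¹ : ZMod n)).val = zx.val - 1
      rw [hzy, ← hcastval, ZMod.val_cast_of_lt (by have := ZMod.val_lt zx; omega)]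
    have hLx : L x = zx.val := rfl
    omega
  have hLa₀ : L a₀ = 0 := by
    rw [hL]; simp
  -- the improved hom
  have hbound : ∀ v : V, n * (f v : ℕ) + (n - 1 - L (f v)) < n * n := by
    intro v
    have h1 := (f v).isLt
    have h2 := hLlt (f v)
    have : n * (f v : ℕ) ≤ n * (n - 1) := Nat.mul_le_mul_left n (by omega)
    have h3 : n * (n-1) + (n-1) + 1 = n * n := by
      cases n with
      | zero => omega
      | succ m => simp [Nat.succ_sub_one]; ring
    omega
  have hd0 : 0 < d := by omega
  have hnd1 : 0 < n * d + 1 := by positivity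
  have hkey : (2*d+1) * n ≤ n * n := Nat.mul_le_mul_right n (by omega)
  have hmapadj : ∀ u v : V, G.Adj u v →
      (circK (n*n) (n*d+1)).Adj ⟨n * (f u : ℕ) + (n - 1 - L (f u)), hbound u⟩
        ⟨n * (f v : ℕ) + (n - 1 - L (f v)), hbound v⟩ := by
    intro u v huv
    have hadj := f.map_rel huv
    rw [circK_adj_iff hd0] at hadj
    rw [circK_adj_iff hnd1]
    obtain ⟨h1, h2⟩ := hadj
    have hgu : ((n * (f u : ℕ) + (n - 1 - L (f u)) : ℕ) : ℤ)
        = n * ((f u : ℕ) : ℤ) + ((n:ℤ) - 1 - L (f u)) := by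
      have := hLlt (f u)
      push_cast [Nat.cast_sub (by omega : L (f u) ≤ n - 1), Nat.cast_sub (by omega : 1 ≤ n)]
      ring
    have hgv : ((n * (f v : ℕ) + (n - 1 - L (f v)) : ℕ) : ℤ)
        = n * ((f v : ℕ) : ℤ) + ((n:ℤ) - 1 - L (f v)) := by
      have := hLlt (f v)
      push_cast [Nat.cast_sub (by omega : L (f v) ≤ n - 1), Nat.cast_sub (by omega : 1 ≤ n)]
      ring
    set δ : ℤ := (((f u : ℕ) : ℤ) - ((f v : ℕ) : ℤ)) % (n : ℤ) with hδ
    set E₀ : ℤ := n * δ + ((L (f v) : ℤ) - (L (f u) : ℤ)) with hE₀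
    obtain ⟨q, hq⟩ : ((n:ℤ)) ∣ (((f u : ℕ):ℤ) - ((f v : ℕ):ℤ) - δ) := by
      rw [hδ]
      exact Int.dvd_self_sub_of_emod_eq rfl
    have hLu := hLlt (f u)
    have hLv := hLlt (f v)
    have hLuZ : (L (f u) : ℤ) < n := by exact_mod_cast hLu
    have hLvZ : (L (f v) : ℤ) < n := by exact_mod_cast hLv
    have hLu0 : (0:ℤ) ≤ (L (f u) : ℤ) := by positivity
    have hLv0 : (0:ℤ) ≤ (L (f v) : ℤ) := by positivity
    have hdZ : (2:ℤ) ≤ d := by exact_mod_cast hd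
    have hnZ : (2:ℤ)*d + 1 ≤ n := by exact_mod_cast h2d
    have hn0Z : (0:ℤ) ≤ n := by positivity
    have hkeyZ : 2*((n:ℤ)*d) + (n:ℤ) ≤ (n:ℤ)*n := by
      have h := mul_le_mul_of_nonneg_right hnZ hn0Z
      have he : (2*(d:ℤ)+1)*n = 2*(n*d) + n := by ring
      linarith
    have hnd0 : (0:ℤ) ≤ (n:ℤ)*d := by positivity
    have hE₀bounds : ((n:ℤ) * d + 1) ≤ E₀ ∧ E₀ ≤ (n:ℤ)*n - ((n:ℤ) * d + 1) := by
      rcases eq_or_lt_of_le h1 with heq | hlt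
      · have hfva : f v ≠ a₀ := by
          intro hfv
          exact ha₀ v u (G.adj_symm huv) hfv (by rw [← hδ, ← heq])
        have hst := hstep (f v) (f u) (by rw [← hδ, ← heq]) hfva
        have hstZ : (L (f v) : ℤ) = (L (f u) : ℤ) + 1 := by exact_mod_cast hst
        rw [hE₀, ← heq]
        constructor
        · linarith
        · linarith
      · rcases eq_or_lt_of_le h2 with heq2 | hlt2
        · have hrev : (((f v : ℕ) : ℤ) - ((f u : ℕ) : ℤ)) % (n:ℤ) = d := by
            have hxlt : (d:ℕ) < n := by omega
            have := emod_rev hd0 hxlt (x := ((f u : ℕ) : ℤ) - ((f v : ℕ) : ℤ))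
              (by rw [← hδ]; omega)
            rw [show (((f v : ℕ) : ℤ) - ((f u : ℕ) : ℤ))
              = -((((f u : ℕ) : ℤ)) - ((f v : ℕ) : ℤ)) by ring]
            exact this
          have hfua : f u ≠ a₀ := by
            intro hfu
            exact ha₀ u v huv hfu hrev
          have hst := hstep (f u) (f v) hrev hfua
          have hstZ : (L (f u) : ℤ) = (L (f v) : ℤ) + 1 := by exact_mod_cast hst
          rw [hE₀, heq2]
          have he1 : (n:ℤ) * ((n:ℤ) - d) = n*n - n*d := by ring
          constructor
          · linarith
          · linarith
        · have hδ1 : (d:ℤ) + 1 ≤ δ := hlt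
          have hδ2 : δ ≤ (n:ℤ) - d - 1 := by omega
          have hb1 : (n:ℤ) * (d+1) ≤ (n:ℤ) * δ := mul_le_mul_of_nonneg_left hδ1 hn0Z
          have hb2 : (n:ℤ) * δ ≤ (n:ℤ) * ((n:ℤ) - d - 1) := mul_le_mul_of_nonneg_left hδ2 hn0Z
          have he1 : (n:ℤ) * ((d:ℤ)+1) = n*d + n := by ring
          have he2 : (n:ℤ) * ((n:ℤ) - d - 1) = n*n - n*d - n := by ring
          rw [hE₀]
          constructor
          · linarith
          · linarith
    have hcong : (n * ((f u : ℕ):ℤ) + ((n:ℤ) - 1 - L (f u))) - (n * ((f v : ℕ):ℤ) + ((n:ℤ) - 1 - L (f v)))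
        = E₀ + ((n:ℤ)*n) * q := by
      rw [hE₀]
      linear_combination (n:ℤ) * hq
    have hn0Z' : (0:ℤ) < n := by exact_mod_cast hn0
    have hd0Z : (0:ℤ) < d := by exact_mod_cast hd0
    have hE₀0 : 0 ≤ E₀ := by linarith [hE₀bounds.1]
    have hE₀lt : E₀ < (n:ℤ)*n := by linarith [hE₀bounds.2]
    have hmod : ((n * ((f u : ℕ):ℤ) + ((n:ℤ) - 1 - L (f u))) - (n * ((f v : ℕ):ℤ) + ((n:ℤ) - 1 - L (f v)))) % ((n:ℤ)*n)
        = E₀ := by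
      rw [hcong, Int.add_mul_emod_self_left]
      exact Int.emod_eq_of_lt hE₀0 hE₀lt
    have hcastnn : ((n*n : ℕ) : ℤ) = (n:ℤ)*n := by push_cast; ring
    have hcastnd : ((n*d+1 : ℕ) : ℤ) = (n:ℤ)*d+1 := by push_cast; ring
    constructor
    · show ((n*d+1 : ℕ) : ℤ) ≤ (((n * (f u : ℕ) + (n - 1 - L (f u)) : ℕ) : ℤ) - ((n * (f v : ℕ) + (n - 1 - L (f v)) : ℕ) : ℤ)) % (((n*n : ℕ)) : ℤ)
      rw [hgu, hgv, hcastnn, hcastnd, hmod]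
      exact hE₀bounds.1
    · show (((n * (f u : ℕ) + (n - 1 - L (f u)) : ℕ) : ℤ) - ((n * (f v : ℕ) + (n - 1 - L (f v)) : ℕ) : ℤ)) % (((n*n : ℕ)) : ℤ) ≤ ((n*n : ℕ) : ℤ) - ((n*d+1 : ℕ) : ℤ)
      rw [hgu, hgv, hcastnn, hcastnd, hmod]
      linarith [hE₀bounds.2]
  let g : G →g circK (n*n) (n*d+1) :=
    ⟨fun v => ⟨n * (f v : ℕ) + (n - 1 - L (f v)), hbound v⟩, fun huv => hmapadj _ _ huv⟩
  have hmem : ((n*n : ℕ) : ℝ) / ((n*d+1 : ℕ) : ℝ) ∈ circSet G :=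
    ⟨n*n, n*d+1, hnd1, by nlinarith, ⟨g⟩, rfl⟩
  have hfinal := hmin _ hmem
  have hnR : (0:ℝ) < n := by exact_mod_cast hn0
  have hdR : (0:ℝ) < d := by exact_mod_cast hd0
  rw [div_le_div_iff₀ hdR (by positivity)] at hfinal
  push_cast at hfinal
  nlinarith


theorem freeChrom_le_of_circChrom_ne_chrom {V : Type*} [Fintype V] [DecidableEq V]
    (G : SimpleGraph V) (n d : ℕ) (hd : 2 ≤ d) (hgcd : Nat.gcd n d = 1)
    (hc : circChrom G = (n : ℝ) / (d : ℝ)) :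
    freeChrom V G ≤ 2 * G.chromaticNumber - 1 := by
  classical
  have hbdd := circSet_bddBelow G
  have hcs : sInf (circSet G) = (n : ℝ) / (d : ℝ) := hc
  -- G has an edge
  by_cases hE : ∃ u v, G.Adj u v
  swap
  · exfalso
    push_neg at hE
    have h1 : (1:ℝ) ∈ circSet G := by
      refine ⟨1, 1, one_pos, le_refl 1, ⟨⟨fun _ => 0, fun {a b} h => absurd h (hE a b)⟩⟩, by norm_num⟩
    have hlb : ∀ r ∈ circSet G, (1:ℝ) ≤ r := by
      rintro r ⟨N, D, hD, hDN, -, rfl⟩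
      have hDR : (0:ℝ) < D := by exact_mod_cast hD
      rw [le_div_iff₀ hDR]
      norm_num
      exact_mod_cast hDN
    have heq1 : sInf (circSet G) = 1 := le_antisymm (csInf_le hbdd h1) (le_csInf ⟨1, h1⟩ hlb)
    rw [hcs] at heq1
    have hd0 : (0:ℝ) < d := by positivity
    have hnd : n = d := by field_simp at heq1; exact_mod_cast heq1
    rw [hnd, Nat.gcd_self] at hgcd
    omega
  obtain ⟨u₀, v₀, huv₀⟩ := hE
  haveI : Nonempty V := ⟨u₀⟩
  -- chromatic number
  obtain ⟨k, hkχ, hkcol⟩ : ∃ k : ℕ, G.chromaticNumber = (k : ℕ∞) ∧ G.Colorable k := by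
    have h1 : G.chromaticNumber ≤ (Fintype.card V : ℕ∞) :=
      (G.colorable_of_fintype).chromaticNumber_le
    have h2 : G.chromaticNumber ≠ ⊤ := ne_top_of_le_ne_top (by simp) h1
    refine ⟨G.chromaticNumber.toNat, (ENat.coe_toNat h2).symm, ?_⟩
    rw [← SimpleGraph.chromaticNumber_le_iff_colorable, (ENat.coe_toNat h2)]
  obtain ⟨col⟩ := hkcol
  have hk1 : 0 < k := (col u₀).pos
  -- hom to circK k 1
  have hhomk : Nonempty (G →g circK k 1) := by
    refine ⟨⟨fun v => col v, ?_⟩⟩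
    intro a b hab
    have hne := col.valid hab
    have h1 : (col a : ℤ) ≠ (col b : ℤ) := by
      intro h
      exact hne (Fin.ext (by exact_mod_cast h))
    have ha' : (col a : ℤ) < k := by exact_mod_cast (col a).isLt
    have hb' : (col b : ℤ) < k := by exact_mod_cast (col b).isLt
    have ha0 : (0:ℤ) ≤ (col a : ℤ) := Int.natCast_nonneg _
    have hb0 : (0:ℤ) ≤ (col b : ℤ) := Int.natCast_nonneg _
    refine ⟨hne, ?_, ?_⟩
    · push_cast
      rcases le_or_gt (col a : ℤ) (col b) with h | h
      · rw [abs_of_nonpos (by linarith)]; omega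
      · rw [abs_of_pos (by linarith)]; omega
    · push_cast
      rcases le_or_gt (col a : ℤ) (col b) with h | h
      · rw [abs_of_nonpos (by linarith)]; omega
      · rw [abs_of_pos (by linarith)]; omega
  have hmemk : ((k:ℝ)/((1:ℕ):ℝ)) ∈ circSet G := ⟨k, 1, one_pos, hk1, hhomk, rfl⟩
  have hSne : (circSet G).Nonempty := ⟨_, hmemk⟩
  have hmin : ∀ r ∈ circSet G, (n:ℝ)/d ≤ r := by
    intro r hr
    have := csInf_le hbdd hr
    rwa [hcs] at this
  have hd0 : 0 < d := by omega
  have hdR : (0:ℝ) < d := by exact_mod_cast hd0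
  -- every achievable ratio is ≥ 2, hence n ≥ 2d
  have hn2d : 2*d ≤ n := by
    have h2 : (2:ℝ) ≤ sInf (circSet G) := by
      refine le_csInf hSne ?_
      rintro r ⟨N, D, hD, hDN, ⟨f⟩, rfl⟩
      obtain ⟨-, h1, h2⟩ := f.map_rel huv₀
      have hDR : (0:ℝ) < D := by exact_mod_cast hD
      rw [le_div_iff₀ hDR]
      have : (D:ℤ) ≤ (N:ℤ) - D := le_trans h1 h2
      have : 2*(D:ℤ) ≤ N := by omega
      exact_mod_cast this
    rw [hcs, le_div_iff₀ hdR] at h2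
    exact_mod_cast h2
  -- n/d ≤ k and d ∤ n give n + 1 ≤ k*d
  have hkd : n + 1 ≤ k * d := by
    have h := hmin _ hmemk
    rw [div_le_div_iff₀ hdR (by norm_num)] at h
    have hnk : n ≤ k * d := by
      have h' : (n:ℝ) ≤ k * d := by push_cast at h; linarith
      exact_mod_cast h' 
    rcases eq_or_lt_of_le hnk with heq | hlt
    · exfalso
      have : Nat.gcd n d = d := by
        rw [heq]
        exact Nat.gcd_eq_right (dvd_mul_left d k)
      omega
    · omega
  have h2d1 : 2*d + 1 ≤ n := by
    rcases eq_or_lt_of_le hn2d with heq | hlt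
    · exfalso
      have : Nat.gcd n d = d := by
        rw [← heq]
        exact Nat.gcd_eq_right (dvd_mul_left d 2)
      omega
    · omega
  have hn0 : 0 < n := by omega
  -- attainment and tightness
  obtain ⟨f⟩ := attained G n d hd0 (by omega) hSne hcs
  have htight := all_tight G n d hd hgcd h2d1 f hmin
  -- the partition into blocks of circular width d-1
  set m : ℕ := (n-1)/(d-1) + 1 with hm
  set B : ℕ → Finset V := fun j => Finset.univ.filter (fun v => ((f v : ℕ)) / (d - 1) = j)
    with hB
  have hmemB : ∀ j, ∀ w : V, w ∈ B j → j * (d-1) ≤ (f w : ℕ) ∧ (f w : ℕ) ≤ j * (d-1) + d - 2 := by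
    intro j w hw
    simp only [hB, Finset.mem_filter, Finset.mem_univ, true_and] at hw
    have h1 : j * (d-1) ≤ (f w : ℕ) := by
      have := Nat.div_mul_le_self (f w : ℕ) (d-1)
      rw [hw] at this
      exact this
    have h2 : (f w : ℕ) < ((f w : ℕ)/(d-1) + 1) * (d-1) :=
      (Nat.div_lt_iff_lt_mul (by omega : 0 < d - 1)).1 (Nat.lt_succ_self _)
    rw [hw] at h2
    have hexp : (j+1)*(d-1) = j*(d-1) + (d-1) := by ring
    omega
  have hfree : ∀ j, j < m → FreeIndep G ((B j : Finset V) : Set V) := by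
    intro j hj
    have hs : j * (d-1) ≤ n - 1 := by
      have h1 : j ≤ (n-1)/(d-1) := by omega
      calc j * (d-1) ≤ ((n-1)/(d-1)) * (d-1) := Nat.mul_le_mul_right _ h1
        _ ≤ n - 1 := Nat.div_mul_le_self _ _
    set s : ℕ := j * (d-1) with hsdef
    set c₀ : Fin n := ⟨(s + n - 1) % n, Nat.mod_lt _ hn0⟩ with hc₀
    obtain ⟨u, v, huv, hfu, hfv⟩ := htight c₀
    have hc₀val : ((c₀ : ℕ) : ℤ) = ((s:ℤ) + n - 1) % n := by
      show (((s + n - 1) % n : ℕ) : ℤ) = ((s:ℤ) + n - 1) % n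
      push_cast [Nat.cast_sub (by omega : 1 ≤ s + n)]
      ring_nf
    -- offsets from base c₀ for block members
    have hoffB : ∀ w : V, w ∈ B j → (((f w : ℕ):ℤ) - ((c₀:ℕ):ℤ)) % n ≤ (d:ℤ) - 1 := by
      intro w hw
      obtain ⟨h1, h2⟩ := hmemB j w hw
      have h1Z : (s:ℤ) ≤ ((f w : ℕ):ℤ) := by exact_mod_cast h1
      have h2Z : ((f w : ℕ):ℤ) ≤ (s:ℤ) + d - 2 := by
        have : ((f w : ℕ):ℤ) ≤ ((s + d - 2 : ℕ) : ℤ) := by exact_mod_cast h2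
        have hcast : ((s + d - 2 : ℕ) : ℤ) = (s:ℤ) + d - 2 := by
          push_cast [Nat.cast_sub (by omega : 2 ≤ s + d)]
          ring
        omega
      have hkey : (((f w : ℕ):ℤ) - ((c₀:ℕ):ℤ)) % n = ((f w : ℕ):ℤ) - s + 1 := by
        rw [hc₀val, Int.sub_emod, Int.emod_emod_of_dvd _ dvd_rfl, ← Int.sub_emod,
          show (((f w : ℕ):ℤ) - ((s:ℤ) + n - 1)) = ((((f w : ℕ):ℤ) - s + 1) + (n:ℤ) * (-1)) by ring,
          Int.add_mul_emod_self_left]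
        exact Int.emod_eq_of_lt (by omega) (by omega)
      omega
    -- independence of B ∪ {u}
    have hindep1 : IsIndep G ((B j : Set V) ∪ {u}) := by
      intro w₁ hw₁ w₂ hw₂ hadj
      have hoff : ∀ w : V, w ∈ ((B j : Set V) ∪ {u}) →
          (((f w : ℕ):ℤ) - ((c₀:ℕ):ℤ)) % n ≤ (d:ℤ) - 1 := by
        intro w hw
        rcases hw with hw | hw
        · exact hoffB w (by exact_mod_cast hw)
        · rw [Set.mem_singleton_iff] at hw
          subst hw
          rw [hfu]
          simp only [sub_self, Int.zero_emod]
          omega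
      exact not_adj_near hd0 hn2d c₀ (f w₁) (f w₂) (hoff w₁ hw₁) (hoff w₂ hw₂) (f.map_rel hadj)
    -- independence of B ∪ {v}
    have hindep2 : IsIndep G ((B j : Set V) ∪ {v}) := by
      set base₂ : Fin n := ⟨s % n, Nat.mod_lt _ hn0⟩ with hbase₂
      have hbase₂val : ((base₂ : ℕ) : ℤ) = (s:ℤ) := by
        show (((s % n : ℕ)) : ℤ) = (s:ℤ)
        rw [Nat.mod_eq_of_lt (by omega)]
      intro w₁ hw₁ w₂ hw₂ hadj
      have hoff : ∀ w : V, w ∈ ((B j : Set V) ∪ {v}) →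
          (((f w : ℕ):ℤ) - ((base₂:ℕ):ℤ)) % n ≤ (d:ℤ) - 1 := by
        intro w hw
        rcases hw with hw | hw
        · obtain ⟨h1, h2⟩ := hmemB j w (by exact_mod_cast hw)
          have h1Z : (s:ℤ) ≤ ((f w : ℕ):ℤ) := by exact_mod_cast h1
          have h2Z : ((f w : ℕ):ℤ) ≤ (s:ℤ) + d - 2 := by
            have : ((f w : ℕ):ℤ) ≤ ((s + d - 2 : ℕ) : ℤ) := by exact_mod_cast h2
            have hcast : ((s + d - 2 : ℕ) : ℤ) = (s:ℤ) + d - 2 := by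
              push_cast [Nat.cast_sub (by omega : 2 ≤ s + d)]
              ring
            omega
          have hwlt : ((f w : ℕ):ℤ) < n := by exact_mod_cast (f w).isLt
          rw [hbase₂val, Int.emod_eq_of_lt (by omega) (by omega)]
          omega
        · rw [Set.mem_singleton_iff] at hw
          rw [hw, hbase₂val]
          have h2 : ((((c₀:ℕ)):ℤ) - s) % n = (n:ℤ) - 1 := by
            rw [hc₀val, Int.sub_emod, Int.emod_emod_of_dvd _ dvd_rfl, ← Int.sub_emod,
              show ((s:ℤ) + n - 1 - s) = (n:ℤ) - 1 by ring]
            exact Int.emod_eq_of_lt (by omega) (by omega)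
          have h1 : (((f v : ℕ):ℤ) - (s:ℤ)) % n
              = ((((f v : ℕ):ℤ) - ((f u : ℕ):ℤ)) % n + ((((f u : ℕ):ℤ) - (s:ℤ)) % n)) % n := by
            rw [← Int.add_emod]
            congr 1
            ring
          rw [h1, hfv, hfu, h2,
            show ((d:ℤ) + ((n:ℤ) - 1)) = ((d:ℤ) - 1) + (n:ℤ) * 1 by ring,
            Int.add_mul_emod_self_left, Int.emod_eq_of_lt (by omega) (by omega)]
      exact not_adj_near hd0 hn2d base₂ (f w₁) (f w₂) (hoff w₁ hw₁) (hoff w₂ hw₂) (f.map_rel hadj)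
    exact free_of_cert hindep1 hindep2 huv
  -- assemble the partition
  set P : Finset (Finset V) := (Finset.range m).image (fun j => B j) with hP
  have hstep1 : freeChrom V G ≤ (P.card : ℕ∞) := by
    refine sInf_le ⟨P, rfl, ?_, ?_, ?_⟩
    · intro F hF
      obtain ⟨j, hj, rfl⟩ := Finset.mem_image.mp hF
      exact hfree j (Finset.mem_range.mp hj)
    · intro F₁ h₁ F₂ h₂ hne
      obtain ⟨j₁, hj₁, rfl⟩ := Finset.mem_image.mp (Finset.mem_coe.mp h₁)
      obtain ⟨j₂, hj₂, rfl⟩ := Finset.mem_image.mp (Finset.mem_coe.mp h₂)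
      have hjne : j₁ ≠ j₂ := fun h => hne (by rw [h])
      simp only [Function.onFun, id]
      rw [Finset.disjoint_left]
      intro w hw₁ hw₂
      simp only [hB, Finset.mem_filter, Finset.mem_univ, true_and] at hw₁ hw₂
      exact hjne (by omega)
    · rw [Finset.eq_univ_iff_forall]
      intro w
      rw [Finset.mem_sup]
      refine ⟨B ((f w : ℕ)/(d-1)), Finset.mem_image_of_mem _ (Finset.mem_range.mpr ?_), ?_⟩
      · have h1 : (f w:ℕ)/(d-1) ≤ (n-1)/(d-1) :=
          Nat.div_le_div_right (by have := (f w).isLt; omega)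
        omega
      · simp [hB]
  have hcard : P.card ≤ 2*k - 1 := by
    have h1 : P.card ≤ m := le_trans Finset.card_image_le (by simp)
    have h2 : m ≤ 2*k - 1 := by
      have hdiv : (n-1)/(d-1) < 2*k - 2 + 1 := by
        rw [Nat.div_lt_iff_lt_mul (by omega : 0 < d - 1)]
        have hZ : (n:ℤ) - 1 < (2*(k:ℤ) - 2 + 1)*((d:ℤ)-1) := by
          have e1 : (1:ℤ) ≤ k := by exact_mod_cast hk1
          have e2 : (2:ℤ) ≤ d := by exact_mod_cast hd
          have e3 : (n:ℤ)+1 ≤ k*d := by exact_mod_cast hkd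
          nlinarith [mul_nonneg (by linarith : (0:ℤ) ≤ (k:ℤ) - 1) (by linarith : (0:ℤ) ≤ (d:ℤ) - 2)]
        zify [show 1 ≤ n by omega, show 1 ≤ d by omega, show 2 ≤ 2*k by omega]
        linarith
      omega
    omega
  rw [hkχ]
  calc freeChrom V G ≤ (P.card : ℕ∞) := hstep1
    _ ≤ ((2*k - 1 : ℕ) : ℕ∞) := by exact_mod_cast hcard
    _ = 2 * (k:ℕ∞) - 1 := by
        rw [ENat.coe_sub, Nat.cast_mul, Nat.cast_ofNat, Nat.cast_one]
end

section
/- Let X = (x_1,...,x_n) ∈ {-,0,+}^n. If alt(X) ≥ s(k-1) + 2 for an even positive integer s, then the set X⁺ = {i : x_i = +} contains a 2-stable subset of [n] of size at least (s/2)(k-1) + 1, and so does X⁻. -/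
/-- `l` is (the index list of) an alternating subsequence of the sign vector `x`:
the indices are increasing, all the corresponding coordinates are nonzero, and
consecutive coordinates have different signs. -/
def IsAltSubseq {n : ℕ} (x : Fin n → SignType) (l : List (Fin n)) : Prop :=
  l.Chain' (· < ·) ∧ (∀ i ∈ l, x i ≠ 0) ∧ l.Chain' (fun i j => x i ≠ x j)

/-- A subset `T` of the circularly ordered set `{0,…,n-1}` is `s`-stable if any two
distinct elements `i < j` of `T` satisfy `s ≤ j - i ≤ n - s`. -/
def IsStableFin (n s : ℕ) (T : Finset (Fin n)) : Prop :=
  ∀ i ∈ T, ∀ j ∈ T, (i : ℕ) < (j : ℕ) → s ≤ (j : ℕ) - (i : ℕ) ∧ (j : ℕ) - (i : ℕ) ≤ n - s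

private lemma two_val {a b c : SignType} (ha : a ≠ 0) (hb : b ≠ 0) (hc : c ≠ 0)
    (h1 : a ≠ b) (h2 : b ≠ c) : a = c := by
  cases a <;> cases b <;> cases c <;> simp_all

/-- Key counting/endpoint lemma for alternating sign lists. -/
private lemma alt_key : ∀ (m : List SignType), (∀ a ∈ m, a ≠ 0) → m.Chain' (· ≠ ·) →
    Even m.length →
    (∀ σ : SignType, σ ≠ 0 → m.countP (fun a => decide (a = σ)) = m.length / 2) ∧
    (∀ (hne : m ≠ []), m.head hne ≠ m.getLast hne)
  | [] => by
      intro _ _ _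
      refine ⟨fun σ _ => by simp, fun h => absurd rfl h⟩
  | [a] => by
      intro _ _ he
      simp [Nat.even_iff] at he
  | a :: b :: t => by
      intro h0 hc he
      have ha : a ≠ 0 := h0 a (by simp)
      have hb : b ≠ 0 := h0 b (by simp)
      have hab : a ≠ b := (List.isChain_cons_cons.mp hc).1
      have hct : (b :: t).Chain' (· ≠ ·) := (List.isChain_cons_cons.mp hc).2
      have ht0 : ∀ c ∈ t, c ≠ 0 := fun c hcm => h0 c (by simp [hcm])
      have hte : Even t.length := by
        simp only [List.length_cons] at he
        rcases he with ⟨r, hr⟩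
        exact ⟨r - 1, by omega⟩
      have IH := alt_key t ht0 hct.tail hte
      constructor
      · intro σ hσ
        have hone : (if (decide (a = σ)) = true then 1 else 0) +
            (if (decide (b = σ)) = true then 1 else 0) = 1 := by
          cases a <;> cases b <;> cases σ <;> simp_all
        have := IH.1 σ hσ
        simp only [List.countP_cons, List.length_cons]
        omega
      · intro _
        cases t with
        | nil =>
            simpa using hab
        | cons c t' =>
            have hc0 : c ≠ 0 := h0 c (by simp)
            have hbc : b ≠ c := (List.isChain_cons_cons.mp hct).1
            have hac : a = c := two_val ha hb hc0 hab hbc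
            have hIH := IH.2 (by simp)
            have h1 : (a :: b :: c :: t').getLast (by simp) = (c :: t').getLast (by simp) := by
              rw [List.getLast_cons (by simp), List.getLast_cons (by simp)]
            rw [List.head_cons, h1]
            rw [List.head_cons] at hIH
            rwa [hac]

private lemma sorted_head_le {n : ℕ} {l : List (Fin n)} (hs : l.Pairwise (· < ·))
    {i : Fin n} (hi : i ∈ l) (hne : l ≠ []) : l.head hne ≤ i := by
  cases l with
  | nil => exact absurd rfl hne
  | cons a t =>
      rcases List.mem_cons.mp hi with h | h
      · simp [h, List.head_cons]
      · exact le_of_lt ((List.pairwise_cons.mp hs).1 i h)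

private lemma sorted_le_getLast {n : ℕ} : ∀ {l : List (Fin n)}, l.Pairwise (· < ·) →
    ∀ {i : Fin n}, i ∈ l → ∀ (hne : l ≠ []), i ≤ l.getLast hne
  | [] => by intro _ i hi _; simp at hi
  | a :: t => by
      intro hs i hi hne
      cases t with
      | nil =>
          simp at hi
          simp [hi, List.getLast_singleton]
      | cons c t' =>
          have hst : (c :: t').Pairwise (· < ·) := (List.pairwise_cons.mp hs).2
          rw [List.getLast_cons (by simp)]
          rcases List.mem_cons.mp hi with h | h
          · subst h
            exact le_of_lt ((List.pairwise_cons.mp hs).1 _ (List.getLast_mem _))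
          · exact sorted_le_getLast hst h (by simp)

/-- If `i` and `j` are adjacent integers both appearing in an increasing list whose
signs alternate, then their signs differ. -/
private lemma adj_ne {n : ℕ} {x : Fin n → SignType} :
    ∀ {l : List (Fin n)}, l.Pairwise (· < ·) → l.Chain' (fun i j => x i ≠ x j) →
    ∀ {i j : Fin n}, i ∈ l → j ∈ l → (j : ℕ) = (i : ℕ) + 1 → x i ≠ x j
  | [] => by intro _ _ i j hi _ _; simp at hi
  | a :: t => by
      intro hs hc i j hi hj hij
      have hpa : ∀ b ∈ t, a < b := (List.pairwise_cons.mp hs).1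
      have hst : t.Pairwise (· < ·) := (List.pairwise_cons.mp hs).2
      rcases List.mem_cons.mp hi with hi' | hi'
      · rcases List.mem_cons.mp hj with hj' | hj'
        · subst hi'; subst hj'; omega
        · -- i = a, j ∈ t
          subst hi'
          cases t with
          | nil => simp at hj'
          | cons c t' =>
              rcases List.mem_cons.mp hj' with hj'' | hj''
              · subst hj''
                exact (List.isChain_cons_cons.mp hc).1
              · have h1 : i < c := hpa c (by simp)
                have h2 : c < j := (List.pairwise_cons.mp hst).1 j hj''
                have : (i : ℕ) < (c : ℕ) ∧ (c : ℕ) < (j : ℕ) := ⟨h1, h2⟩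
                omega
      · rcases List.mem_cons.mp hj with hj' | hj'
        · subst hj'
          have : j < i := hpa i hi'
          have : (j : ℕ) < (i : ℕ) := this
          omega
        · exact adj_ne hst hc.tail hi' hj' hij

private lemma build {n : ℕ} {x : Fin n → SignType} {l : List (Fin n)}
    (hl : IsAltSubseq x l) (he : Even l.length) (σ : SignType) (hσ : σ ≠ 0) :
    ∃ T : Finset (Fin n), (∀ i ∈ T, x i = σ) ∧ l.length / 2 ≤ T.card ∧ IsStableFin n 2 T := by
  obtain ⟨hlt, h0, hcs⟩ := hl
  have hsort : l.Pairwise (· < ·) := List.isChain_iff_pairwise.mp hlt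
  have hnd : l.Nodup := hsort.imp ne_of_lt
  set lf := l.filter (fun i => decide (x i = σ)) with hlf
  refine ⟨lf.toFinset, ?_, ?_, ?_⟩
  · intro i hi
    rw [List.mem_toFinset, hlf, List.mem_filter] at hi
    exact of_decide_eq_true hi.2
  · -- cardinality
    have hm0 : ∀ a ∈ l.map x, a ≠ 0 := by
      intro a ha
      obtain ⟨i, hi, rfl⟩ := List.mem_map.mp ha
      exact h0 i hi
    have hmc : (l.map x).Chain' (· ≠ ·) := List.isChain_map_of_isChain x (fun _ _ h => h) hcs
    have hme : Even (l.map x).length := by simpa using he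
    have hcount := (alt_key (l.map x) hm0 hmc hme).1 σ hσ
    rw [List.countP_map] at hcount
    have hlen : lf.length = l.length / 2 := by
      rw [List.countP_eq_length_filter] at hcount
      simpa [hlf, Function.comp_def] using hcount
    rw [List.toFinset_card_of_nodup (hnd.filter _), hlen]
  · -- stability
    intro i hi j hj hij
    rw [List.mem_toFinset, hlf, List.mem_filter] at hi hj
    have hxi : x i = σ := of_decide_eq_true hi.2
    have hxj : x j = σ := of_decide_eq_true hj.2
    have hil : i ∈ l := hi.1
    have hjl : j ∈ l := hj.1
    constructor
    · by_contra hlt2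
      have hadj : (j : ℕ) = (i : ℕ) + 1 := by omega
      exact adj_ne hsort hcs hil hjl hadj (hxi.trans hxj.symm)
    · by_contra hbig
      have hjn : (j : ℕ) < n := j.isLt
      have hi0 : (i : ℕ) = 0 := by omega
      have hjn1 : (j : ℕ) = n - 1 := by omega
      have hne : l ≠ [] := List.ne_nil_of_mem hil
      have hhead : l.head hne = i := by
        have h1 := sorted_head_le hsort hil hne
        have h2 : (l.head hne : ℕ) ≤ (i : ℕ) := h1
        exact Fin.ext (by omega)
      have hlast : l.getLast hne = j := by
        have h1 := sorted_le_getLast hsort hjl hne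
        have h2 : (j : ℕ) ≤ (l.getLast hne : ℕ) := h1
        have h3 : (l.getLast hne : ℕ) < n := (l.getLast hne).isLt
        exact Fin.ext (by omega)
      have hm0 : ∀ a ∈ l.map x, a ≠ 0 := by
        intro a ha
        obtain ⟨i, hi, rfl⟩ := List.mem_map.mp ha
        exact h0 i hi
      have hmc : (l.map x).Chain' (· ≠ ·) := List.isChain_map_of_isChain x (fun _ _ h => h) hcs
      have hme : Even (l.map x).length := by simpa using he
      have hmne : l.map x ≠ [] := by simpa using hne
      have hend := (alt_key (l.map x) hm0 hmc hme).2 hmne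
      rw [List.head_map, List.getLast_map] at hend
      rw [hhead, hlast, hxi, hxj] at hend
      exact hend rfl

theorem alt_big_gives_two_stable (n k s : ℕ) (hs : 0 < s) (hse : Even s)
    (x : Fin n → SignType)
    (halt : ∃ l : List (Fin n), IsAltSubseq x l ∧ l.length = s * (k - 1) + 2) :
    (∃ T : Finset (Fin n), (∀ i ∈ T, x i = 1) ∧
        s / 2 * (k - 1) + 1 ≤ T.card ∧ IsStableFin n 2 T) ∧
      (∃ T : Finset (Fin n), (∀ i ∈ T, x i = -1) ∧
        s / 2 * (k - 1) + 1 ≤ T.card ∧ IsStableFin n 2 T) := by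
  obtain ⟨l, hl, hlen⟩ := halt
  obtain ⟨t, ht⟩ := hse
  have hmul : s * (k - 1) = 2 * (t * (k - 1)) := by rw [ht]; ring
  have hlen2 : l.length / 2 = s / 2 * (k - 1) + 1 := by
    rw [hlen, hmul]
    have : s / 2 = t := by omega
    rw [this]
    omega
  have he : Even l.length := by
    rw [hlen, hmul]
    exact ⟨t * (k - 1) + 1, by ring⟩
  constructor
  · obtain ⟨T, h1, h2, h3⟩ := build hl he 1 (by decide)
    exact ⟨T, h1, hlen2 ▸ h2, h3⟩
  · obtain ⟨T, h1, h2, h3⟩ := build hl he (-1) (by decide)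
    exact ⟨T, h1, hlen2 ▸ h2, h3⟩
end
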